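/- Let G=(V,E) be a weighted graph with boundary ∂=A⊔B⊔C and let n≥2 be an integer. There exists a subgraph G'=(V',E') of G with A,B⊆V' and an optimal solution (ρ,σ) of the integer program I such that: (1) there is a function k:V'→ℤ with 0≤k(x)≤2(n−1), k≡0 on A and k≡2(n−1) on B, satisfying σ(e)=|k(x)−k(y)| and ρ(e)=0 for every edge e={x,y}∈E'; and (2) letting (AB)'=V'∩V[μ(V')] be the vertices of V' incident to the cut surface μ(V'), G^c=((V∖V')∪(AB)', E∖E') the complementary reduced graph, and Γ_k={x∈(AB)' : k(x)=k} for k=0,…,2(n−1), the optimal value M of the ℓ-intersecting cut problem on G^c with ℓ=2(n−1), boundary sets Γ₀,…,Γ_ℓ and C, satisfies I ≥ M + w(μ(V')) + Σ_{e={x,y}∈E'} w(e)|k(x)−k(y)|. -/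

import Mathlib

open scoped Classical

noncomputable section

namespace RTN

/-! ## Set partitions -/

/-- Number of blocks of a set partition (as an integer). -/
def nb {α : Type*} (p : Setoid α) : ℤ := Nat.card (Quotient p)

/-- The partition distance `d(p,q) = #(p) + #(q) - 2 #(p ⊔ q)`. -/
def pdist {α : Type*} (p q : Setoid α) : ℤ := nb p + nb q - 2 * nb (p ⊔ q)

lemma pdist_comm {α : Type*} (p q : Setoid α) : pdist p q = pdist q p := by
  unfold pdist
  rw [sup_comm p q]
  ring

/-- `k` is a singlet (block of size one) of the partition `p`. -/
def IsSinglet {α : Type*} (p : Setoid α) (k : α) : Prop := ∀ y, p.r k y → y = k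

/-- The number of singlets `#₁(p)` of a partition. -/
def nS {α : Type*} (p : Setoid α) : ℤ := Nat.card {k : α // IsSinglet p k}

/-- The singlet distance `d₁(s₁,s₂) = #₁(s₁) + #₁(s₂) - 2 #₁(s₁ ⊔ s₂)`. -/
def sdist {α : Type*} (s₁ s₂ : Setoid α) : ℤ := nS s₁ + nS s₂ - 2 * nS (s₁ ⊔ s₂)

/-- The singlet pattern `s(p)`: the coarsest partition whose singlets are exactly
those of `p` (all non-singlet elements lie in one block). -/
def spat {α : Type*} (p : Setoid α) : Setoid α where
  r x y := x = y ∨ (¬ IsSinglet p x ∧ ¬ IsSinglet p y)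
  iseqv := by
    refine ⟨fun x => Or.inl rfl, ?_, ?_⟩
    · intro x y h
      rcases h with rfl | ⟨hx, hy⟩
      · exact Or.inl rfl
      · exact Or.inr ⟨hy, hx⟩
    · intro x y z h1 h2
      rcases h1 with rfl | ⟨hx, hy⟩
      · exact h2
      · rcases h2 with rfl | ⟨_, hz⟩
        · exact Or.inr ⟨hx, hy⟩
        · exact Or.inr ⟨hx, hz⟩

/-- The bit `b^k(p)`: `0` if `p` has a singlet at `k`, else `1`. -/
def bbit {α : Type*} (p : Setoid α) (k : α) : ℤ := if IsSinglet p k then 0 else 1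

/-- The size of the block of `p` containing `x`. -/
def blockSize {α : Type*} (p : Setoid α) (x : α) : ℕ := Nat.card {y : α // p.r x y}

noncomputable instance {α : Type*} [Finite α] (s : Setoid α) : Fintype (Quotient s) :=
  Fintype.ofFinite _

/-! ## Permutations -/

/-- The partition of `α` into orbits (cycles) of a permutation. -/
def orbitSetoid {α : Type*} (g : Equiv.Perm α) : Setoid α where
  r x y := ∃ k : ℤ, (g ^ k) x = y
  iseqv := by
    refine ⟨fun x => ⟨0, by simp⟩, ?_, ?_⟩
    · rintro x y ⟨k, rfl⟩
      exact ⟨-k, by simp [← Equiv.Perm.mul_apply, ← zpow_add]⟩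
    · rintro x y z ⟨k, rfl⟩ ⟨l, rfl⟩
      exact ⟨l + k, by rw [zpow_add, Equiv.Perm.mul_apply]⟩

/-- The number of cycles `#(g)` of a permutation (fixed points included). -/
def ncyc {α : Type*} (g : Equiv.Perm α) : ℤ := nb (orbitSetoid g)

/-- The Cayley distance `d(g,h) = N - #(g h⁻¹)`. -/
def cayley {α : Type*} [Fintype α] (g h : Equiv.Perm α) : ℤ :=
  (Fintype.card α : ℤ) - ncyc (g * h⁻¹)

lemma orbitSetoid_inv {α : Type*} (g : Equiv.Perm α) : orbitSetoid g⁻¹ = orbitSetoid g := by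
  apply Setoid.ext
  intro x y
  constructor
  · rintro ⟨k, hk⟩
    exact ⟨-k, by rw [← inv_zpow']; exact hk⟩
  · rintro ⟨k, hk⟩
    exact ⟨-k, by rw [inv_zpow', neg_neg]; exact hk⟩

lemma cayley_comm {α : Type*} [Fintype α] (g h : Equiv.Perm α) : cayley g h = cayley h g := by
  unfold cayley ncyc
  rw [show h * g⁻¹ = (g * h⁻¹)⁻¹ by rw [mul_inv_rev, inv_inv], orbitSetoid_inv]

/-- Coarse graining of a partition `p` by the blocks of `P(g₀)`: the partition of the set
of blocks of `P(g₀)` induced by `p ⊔ P(g₀)`. -/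
def coarse {α : Type*} (g₀ : Equiv.Perm α) (p : Setoid α) :
    Setoid (Quotient (orbitSetoid g₀)) where
  r u v := ∃ x y : α, Quotient.mk (orbitSetoid g₀) x = u ∧ Quotient.mk (orbitSetoid g₀) y = v ∧
    (p ⊔ orbitSetoid g₀).r x y
  iseqv := by
    refine ⟨?_, ?_, ?_⟩
    · intro u
      obtain ⟨x, rfl⟩ := Quotient.exists_rep u
      exact ⟨x, x, rfl, rfl, (p ⊔ orbitSetoid g₀).iseqv.refl x⟩
    · rintro u v ⟨x, y, hx, hy, hxy⟩
      exact ⟨y, x, hy, hx, (p ⊔ orbitSetoid g₀).iseqv.symm hxy⟩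
    · rintro u v w ⟨x, y, hx, hy, hxy⟩ ⟨y', z, hy', hz, hyz⟩
      refine ⟨x, z, hx, hz, ?_⟩
      have h1 : (orbitSetoid g₀).r y y' := Quotient.exact (hy.trans hy'.symm)
      have h2 : (p ⊔ orbitSetoid g₀).r y y' :=
        (le_sup_right : orbitSetoid g₀ ≤ p ⊔ orbitSetoid g₀) h1
      exact (p ⊔ orbitSetoid g₀).iseqv.trans hxy
        ((p ⊔ orbitSetoid g₀).iseqv.trans h2 hyz)

/-- The coarse graining `q_{g₀}(g) ∈ P_{#(g₀)}` of a permutation `g`. -/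
def qc {α : Type*} (g₀ g : Equiv.Perm α) : Setoid (Quotient (orbitSetoid g₀)) :=
  coarse g₀ (orbitSetoid g)

/-! ## Standard reflected-entropy boundary elements -/

/-- `g_B`, the product of `n` disjoint `m`-cycles `(k,ℓ) ↦ (k,ℓ+1)`. -/
def gB (n m : ℕ) : Equiv.Perm (Fin n × Fin m) :=
  Equiv.prodCongr (Equiv.refl (Fin n)) (finRotate m)

/-- `γ`, cyclically shifting `k ↦ k+1` on the elements with `ℓ` in the lower half,
fixing the rest. -/
def gamma (n m : ℕ) : Equiv.Perm (Fin n × Fin m) where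
  toFun x := if m / 2 ≤ (x.2 : ℕ) then (finRotate n x.1, x.2) else x
  invFun x := if m / 2 ≤ (x.2 : ℕ) then ((finRotate n).symm x.1, x.2) else x
  left_inv := by
    intro x
    by_cases h : m / 2 ≤ (x.2 : ℕ) <;> simp [h]
    rcases n with _ | n
    · exact x.1.elim0
    · simp
  right_inv := by
    intro x
    by_cases h : m / 2 ≤ (x.2 : ℕ) <;> simp [h]
    rcases n with _ | n
    · exact x.1.elim0
    · simp

/-- `g_A = γ⁻¹ g_B γ`. -/
def gA (n m : ℕ) : Equiv.Perm (Fin n × Fin m) :=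
  (gamma n m)⁻¹ * gB n m * gamma n m

/-- For even `m`, `Fin m` splits into an upper and a lower half. -/
def halfEquiv (m : ℕ) (hm : m % 2 = 0) : Fin 2 × Fin (m / 2) ≃ Fin m :=
  finProdFinEquiv.trans (finCongr (by omega))

/-- `X`, the product of the `2n` disjoint `(m/2)`-cycles cyclically permuting the
upper and the lower half of each block `k`. -/
def Xel (n m : ℕ) (hm : m % 2 = 0) : Equiv.Perm (Fin n × Fin m) :=
  Equiv.prodCongr (Equiv.refl (Fin n))
    ((halfEquiv m hm).permCongr
      (Equiv.prodCongr (Equiv.refl (Fin 2)) (finRotate (m / 2))))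

/-- The set of blocks of `P(X)`; it has `2n` elements. -/
abbrev BX (n m : ℕ) (hm : m % 2 = 0) := Quotient (orbitSetoid (Xel n m hm))

/-- `q_A = q_X(g_A) ∈ P_{2n}`. -/
def qAel (n m : ℕ) (hm : m % 2 = 0) : Setoid (BX n m hm) :=
  qc (Xel n m hm) (gA n m)

/-- `q_B = q_X(g_B) ∈ P_{2n}`. -/
def qBel (n m : ℕ) (hm : m % 2 = 0) : Setoid (BX n m hm) :=
  qc (Xel n m hm) (gB n m)

/-! ## Doubled elements (two copies) -/

/-- Two copies of the index set `{1,…,mn}`. -/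
abbrev DIdx (n m : ℕ) := (Fin n × Fin m) ⊕ (Fin n × Fin m)

/-- `g̃_A = g_A ⊕ g_A`. -/
def gAt (n m : ℕ) : Equiv.Perm (DIdx n m) := Equiv.sumCongr (gA n m) (gA n m)

/-- `g̃_B = g_B ⊕ g_B`. -/
def gBt (n m : ℕ) : Equiv.Perm (DIdx n m) := Equiv.sumCongr (gB n m) (gB n m)

/-- `X̃ = X ⊕ X`. -/
def Xt (n m : ℕ) (hm : m % 2 = 0) : Equiv.Perm (DIdx n m) :=
  Equiv.sumCongr (Xel n m hm) (Xel n m hm)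

/-- The set of blocks of `P(X̃)`; it has `4n` elements. -/
abbrev BXt (n m : ℕ) (hm : m % 2 = 0) := Quotient (orbitSetoid (Xt n m hm))

/-- `q̃_A = q_{X̃}(g̃_A) ∈ P_{4n}`. -/
def qAt (n m : ℕ) (hm : m % 2 = 0) : Setoid (BXt n m hm) :=
  qc (Xt n m hm) (gAt n m)

/-- `q̃_B = q_{X̃}(g̃_B) ∈ P_{4n}`. -/
def qBt (n m : ℕ) (hm : m % 2 = 0) : Setoid (BXt n m hm) :=
  qc (Xt n m hm) (gBt n m)

/-- A block of `P(X̃)` lies in the first copy. -/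
def inCopy1 {n m : ℕ} {hm : m % 2 = 0} (u : BXt n m hm) : Prop :=
  ∃ x, Quotient.mk (orbitSetoid (Xt n m hm)) (Sum.inl x) = u

/-- `#₁⁽¹⁾(q)`: the number of singlets of `q` among the first-copy positions. -/
def nS1 {n m : ℕ} {hm : m % 2 = 0} (q : Setoid (BXt n m hm)) : ℤ :=
  Nat.card {u : BXt n m hm // IsSinglet q u ∧ inCopy1 u}

/-- `#₁⁽²⁾(q)`: the number of singlets of `q` among the second-copy positions. -/
def nS2 {n m : ℕ} {hm : m % 2 = 0} (q : Setoid (BXt n m hm)) : ℤ :=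
  Nat.card {u : BXt n m hm // IsSinglet q u ∧ ¬ inCopy1 u}

/-- `τ ∈ P_{4n}`, the two-block partition separating the two copies. -/
def tau (n m : ℕ) (hm : m % 2 = 0) : Setoid (BXt n m hm) where
  r u v := inCopy1 u ↔ inCopy1 v
  iseqv := ⟨fun _ => Iff.rfl, Iff.symm, Iff.trans⟩

/-! ## Graphs, cuts and optimization programs -/

variable {V : Type*}

/-- Sum of an edge function along (the edge list of) a walk, with multiplicity. -/
def wkSum {β : Type*} [AddCommMonoid β] {G : SimpleGraph V} {x y : V}
    (f : Sym2 V → β) (L : G.Walk x y) : β :=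
  (L.edges.map f).sum

variable [Fintype V]

/-- Sum of an edge weight function over a set of edges. -/
def wsum (f : Sym2 V → ℝ) (S : Set (Sym2 V)) : ℝ :=
  ∑ e ∈ Finset.univ.filter (· ∈ S), f e

/-- The cut surface `μ(r)`: edges of `G` with one endpoint in `r`, the other outside. -/
def mu (G : SimpleGraph V) (r : Set V) : Set (Sym2 V) :=
  {e | e ∈ G.edgeSet ∧ ∃ x y, e = s(x, y) ∧ x ∈ r ∧ y ∉ r}

/-- `μ(r₁:r₂)`: edges of `G` with an endpoint in `r₁` and an endpoint in `r₂`. -/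
def mu2 (G : SimpleGraph V) (r₁ r₂ : Set V) : Set (Sym2 V) :=
  {e | e ∈ G.edgeSet ∧ ∃ x y, e = s(x, y) ∧ x ∈ r₁ ∧ y ∈ r₂}

/-- `r` is a cut for `X : Y`. -/
def IsCut (X Y r : Set V) : Prop := X ⊆ r ∧ Y ⊆ rᶜ

/-- The minimal cut area `𝒜(X:Y)`. -/
def minCut (G : SimpleGraph V) (w : Sym2 V → ℝ) (X Y : Set V) : ℝ :=
  sInf {a | ∃ r : Set V, IsCut X Y r ∧ a = wsum w (mu G r)}

/-- `(α,β,γ)` is a triway cut for `(A,B,C)`. -/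
def IsTriway (A B C α β γ : Set V) : Prop :=
  α ∪ β ∪ γ = Set.univ ∧ Disjoint α β ∧ Disjoint β γ ∧ Disjoint α γ ∧
    A ⊆ α ∧ B ⊆ β ∧ C ⊆ γ

/-- The area of a triway cut with tensions `(t_{A:B}, t_{B:C}, t_{C:A})`. -/
def triArea (G : SimpleGraph V) (w : Sym2 V → ℝ) (tAB tBC tCA : ℝ)
    (α β γ : Set V) : ℝ :=
  tAB * wsum w (mu2 G α β) + tBC * wsum w (mu2 G β γ) + tCA * wsum w (mu2 G γ α)

/-- The minimal triway cut area `𝒜_t(A:B:C)`. -/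
def triCut (G : SimpleGraph V) (w : Sym2 V → ℝ) (tAB tBC tCA : ℝ)
    (A B C : Set V) : ℝ :=
  sInf {a | ∃ α β γ : Set V, IsTriway A B C α β γ ∧ a = triArea G w tAB tBC tCA α β γ}

/-- Boundary data: `∂ = A ⊔ B ⊔ C` (pairwise disjoint). -/
def Bdy (A B C : Set V) : Prop := Disjoint A B ∧ Disjoint A C ∧ Disjoint B C

/-! ### The permutation optimization `R` -/

/-- The symmetric edge function induced by the Cayley distance of a vertex
configuration of permutations. -/
def permE {ι : Type*} [Fintype ι] (g : V → Equiv.Perm ι) : Sym2 V → ℝ :=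
  Sym2.lift ⟨fun x y => (cayley (g x) (g y) : ℝ),
    fun x y => congrArg Int.cast (cayley_comm (g x) (g y))⟩

/-- The free energy `R(g) = Σ_e w(e) d(g(x),g(y))`. -/
def Renergy {ι : Type*} [Fintype ι] (G : SimpleGraph V) (w : Sym2 V → ℝ)
    (g : V → Equiv.Perm ι) : ℝ :=
  wsum (fun e => w e * permE g e) G.edgeSet

/-- The optimal value `R` of the permutation optimization. -/
def Rval {ι : Type*} [Fintype ι] (G : SimpleGraph V) (w : Sym2 V → ℝ)
    (A B C : Set V) (g₁ g₂ : Equiv.Perm ι) : ℝ :=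
  sInf {a | ∃ g : V → Equiv.Perm ι,
    (∀ v ∈ A, g v = g₁) ∧ (∀ v ∈ B, g v = g₂) ∧ (∀ v ∈ C, g v = 1) ∧
    a = Renergy G w g}

/-! ### The set-partition optimization `Q` -/

/-- The symmetric integer edge function induced by the partition distance of a vertex
configuration of partitions. -/
def partEZ {κ : Type*} (q : V → Setoid κ) : Sym2 V → ℤ :=
  Sym2.lift ⟨fun x y => pdist (q x) (q y), fun x y => pdist_comm (q x) (q y)⟩

/-- The free energy `Q(q) = Σ_e w(e) d(q(x),q(y))`. -/
def Qenergy {κ : Type*} (G : SimpleGraph V) (w : Sym2 V → ℝ)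
    (q : V → Setoid κ) : ℝ :=
  wsum (fun e => w e * (partEZ q e : ℝ)) G.edgeSet

/-- The optimal value `Q` of the set-partition optimization. -/
def Qval {κ : Type*} (G : SimpleGraph V) (w : Sym2 V → ℝ)
    (A B C : Set V) (q₁ q₂ : Setoid κ) : ℝ :=
  sInf {a | ∃ q : V → Setoid κ,
    (∀ v ∈ A, q v = q₁) ∧ (∀ v ∈ B, q v = q₂) ∧ (∀ v ∈ C, q v = ⊥) ∧
    a = Qenergy G w q}

/-! ### The Boolean optimization `B` -/

/-- The Hamming distance between two bit strings. -/
def ham {κ : Type*} [Fintype κ] (b₁ b₂ : κ → Bool) : ℤ :=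
  ∑ k : κ, if b₁ k = b₂ k then 0 else 1

/-- The bit string `b(q)` of a partition: `false` exactly at singlets. -/
def bvec {κ : Type*} (p : Setoid κ) : κ → Bool :=
  fun u => if IsSinglet p u then false else true

/-- Feasibility of `r` for the Boolean program at configuration `b`. -/
def Bfeas {κ : Type*} [Fintype κ] (G : SimpleGraph V) (A B : Set V) (n : ℕ)
    (b : V → κ → Bool) (r : Sym2 V → ℕ) : Prop :=
  (∀ x ∈ A, ∀ y ∈ B, ∀ L : G.Walk x y,
    2 ∣ wkSum (fun e => (r e : ℤ)) L ∧
    wkSum (fun e => (r e : ℤ)) L ≥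
      2 * ((n : ℤ) - if ∀ v ∈ L.support, ∀ k, b v k = true then 1 else 0)) ∧
  (∀ x y : V, G.Adj x y → (r s(x, y) : ℤ) ≥ ⌈(ham (b x) (b y) : ℚ) / 2⌉)

/-- The inner Boolean optimum `B(b)` at a fixed Boolean configuration `b`. -/
def BvalAt {κ : Type*} [Fintype κ] (G : SimpleGraph V) (w : Sym2 V → ℝ)
    (A B : Set V) (n : ℕ) (b : V → κ → Bool) : ℝ :=
  sInf {a | ∃ r : Sym2 V → ℕ, Bfeas G A B n b r ∧
    a = wsum (fun e => w e * (r e : ℝ)) G.edgeSet}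

/-- The optimal value `B` of the Boolean optimization. -/
def Bval (κ : Type*) [Fintype κ] (G : SimpleGraph V) (w : Sym2 V → ℝ)
    (A B C : Set V) (n : ℕ) : ℝ :=
  sInf {a | ∃ b : V → κ → Bool,
    (∀ v ∈ A ∪ B, ∀ k, b v k = true) ∧ (∀ v ∈ C, ∀ k, b v k = false) ∧
    ∃ r : Sym2 V → ℕ, Bfeas G A B n b r ∧
      a = wsum (fun e => w e * (r e : ℝ)) G.edgeSet}

/-! ### The integer program `I` -/

/-- Feasibility of `(ρ,σ)` for the integer program. -/
def IPfeas (G : SimpleGraph V) (A B C : Set V) (n : ℕ) (ρ σ : Sym2 V → ℕ) : Prop :=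
  (∀ x ∈ A, ∀ y ∈ B, ∀ L : G.Walk x y,
    2 ∣ wkSum (fun e => (σ e : ℤ) + (ρ e : ℤ)) L ∧
    wkSum (fun e => (σ e : ℤ) + (ρ e : ℤ)) L ≥
      2 * ((n : ℤ) - if wkSum (fun e => (ρ e : ℤ)) L = 0 then 1 else 0)) ∧
  (∀ x ∈ A ∪ B, ∀ y ∈ C, ∀ L : G.Walk x y,
    wkSum (fun e => (ρ e : ℤ)) L ≥ (n : ℤ))

/-- The objective of the integer program. -/
def IPobj (G : SimpleGraph V) (w : Sym2 V → ℝ) (ρ σ : Sym2 V → ℕ) : ℝ :=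
  wsum (fun e => w e * ((σ e : ℝ) + (ρ e : ℝ))) G.edgeSet

/-- The optimal value `I` of the integer program. -/
def Ival (G : SimpleGraph V) (w : Sym2 V → ℝ) (A B C : Set V) (n : ℕ) : ℝ :=
  sInf {a | ∃ ρ σ : Sym2 V → ℕ, IPfeas G A B C n ρ σ ∧ a = IPobj G w ρ σ}

/-! ### The ℓ-intersecting cut problem `M` -/

/-- Feasibility for the `ℓ`-intersecting cut problem with boundary sets
`Γ₀, …, Γ_ℓ` and `C`, for a half-integer valued `ϱ`. -/
def Mfeas (G : SimpleGraph V) (Γ : ℕ → Set V) (ℓ : ℕ) (C : Set V)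
    (ϱ : Sym2 V → ℚ) : Prop :=
  (∀ e, ∃ j : ℕ, ϱ e = (j : ℚ) / 2) ∧
  (∀ k k' : ℕ, k ≤ ℓ → k' ≤ ℓ → ∀ x ∈ Γ k, ∀ y ∈ Γ k', ∀ L : G.Walk x y,
    ∃ j : ℕ, wkSum ϱ L = |(k : ℚ) - (k' : ℚ)| + (j : ℚ)) ∧
  (∀ k : ℕ, k ≤ ℓ → ∀ x ∈ Γ k, ∀ y ∈ C, ∀ L : G.Walk x y,
    ∃ j : ℕ, wkSum ϱ L = (ℓ : ℚ) / 2 + (j : ℚ))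

/-- The objective of the `ℓ`-intersecting cut problem. -/
def Mobj (G : SimpleGraph V) (w : Sym2 V → ℝ) (ϱ : Sym2 V → ℚ) : ℝ :=
  wsum (fun e => w e * (ϱ e : ℝ)) G.edgeSet

/-- The optimal value `M` of the `ℓ`-intersecting cut problem. -/
def Mval (G : SimpleGraph V) (w : Sym2 V → ℝ) (Γ : ℕ → Set V) (ℓ : ℕ)
    (C : Set V) : ℝ :=
  sInf {a | ∃ ϱ : Sym2 V → ℚ, Mfeas G Γ ℓ C ϱ ∧ a = Mobj G w ϱ}

/-- The complementary reduced graph `G^c`: the edges of `G` not lying entirely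
inside `V'`. -/
def reducedGraph (G : SimpleGraph V) (V' : Set V) : SimpleGraph V where
  Adj x y := G.Adj x y ∧ ¬ (x ∈ V' ∧ y ∈ V')
  symm := by
    refine ⟨?_⟩
    intro x y h
    exact ⟨h.1.symm, fun hc => h.2 ⟨hc.2, hc.1⟩⟩
  loopless := by
    refine ⟨?_⟩
    intro x h
    exact G.loopless.irrefl x h.1

end RTN

namespace SSOS
open RTN SimpleGraph

variable {V : Type*}

/-- ℕ-valued walk sum. -/
def S {G : SimpleGraph V} {x y : V} (f : Sym2 V → ℕ) (L : G.Walk x y) : ℕ :=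
  (L.edges.map f).sum

@[simp] lemma S_nil {G : SimpleGraph V} {x : V} (f : Sym2 V → ℕ) :
    S f (SimpleGraph.Walk.nil : G.Walk x x) = 0 := rfl

@[simp] lemma S_cons {G : SimpleGraph V} {x y z : V} (f : Sym2 V → ℕ)
    (h : G.Adj x y) (L : G.Walk y z) :
    S f (SimpleGraph.Walk.cons h L) = f s(x, y) + S f L := by
  simp [S]

@[simp] lemma S_append {G : SimpleGraph V} {x y z : V} (f : Sym2 V → ℕ)
    (L : G.Walk x y) (L' : G.Walk y z) :
    S f (L.append L') = S f L + S f L' := by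
  simp [S, SimpleGraph.Walk.edges_append]

@[simp] lemma S_reverse {G : SimpleGraph V} {x y : V} (f : Sym2 V → ℕ)
    (L : G.Walk x y) : S f L.reverse = S f L := by
  simp [S, SimpleGraph.Walk.edges_reverse, List.sum_reverse]

@[simp] lemma S_concat {G : SimpleGraph V} {x y z : V} (f : Sym2 V → ℕ)
    (L : G.Walk x y) (h : G.Adj y z) :
    S f (L.concat h) = S f L + f s(y, z) := by
  simp [S, SimpleGraph.Walk.edges_concat]

lemma S_mono {G : SimpleGraph V} {x y : V} {f g : Sym2 V → ℕ}
    (hfg : ∀ e, f e ≤ g e) (L : G.Walk x y) : S f L ≤ S g L := by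
  induction L with
  | nil => simp
  | cons h L ih => simp only [S_cons]; exact Nat.add_le_add (hfg _) ih

lemma S_congr {G : SimpleGraph V} {x y : V} {f g : Sym2 V → ℕ}
    (L : G.Walk x y) (hfg : ∀ e ∈ L.edges, f e = g e) : S f L = S g L := by
  induction L with
  | nil => simp
  | cons h L ih =>
      simp only [S_cons]
      rw [hfg _ (by simp), ih (fun e he => hfg e (by simp [he]))]

lemma wkSum_intCast {G : SimpleGraph V} {x y : V} (f : Sym2 V → ℕ)
    (L : G.Walk x y) :
    wkSum (fun e => (f e : ℤ)) L = ((S f L : ℕ) : ℤ) := by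
  induction L with
  | nil => rfl
  | cons h L ih =>
      simp only [wkSum, SimpleGraph.Walk.edges_cons, List.map_cons, List.sum_cons, S_cons] at *
      rw [ih]; push_cast; ring

lemma wkSum_ratCast {G : SimpleGraph V} {x y : V} (f : Sym2 V → ℕ)
    (L : G.Walk x y) :
    wkSum (fun e => (f e : ℚ)) L = ((S f L : ℕ) : ℚ) := by
  induction L with
  | nil => rfl
  | cons h L ih =>
      simp only [wkSum, SimpleGraph.Walk.edges_cons, List.map_cons, List.sum_cons, S_cons] at *
      rw [ih]; push_cast; ring

lemma wkSum_addCast {G : SimpleGraph V} {x y : V} (f g : Sym2 V → ℕ)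
    (L : G.Walk x y) :
    wkSum (fun e => (f e : ℤ) + (g e : ℤ)) L = ((S (fun e => f e + g e) L : ℕ) : ℤ) := by
  induction L with
  | nil => rfl
  | cons h L ih =>
      simp only [wkSum, SimpleGraph.Walk.edges_cons, List.map_cons, List.sum_cons, S_cons] at *
      rw [ih]; push_cast; ring

end SSOS
namespace SSOS
open RTN SimpleGraph

variable {V : Type*}

/-- Reachability from a set. -/
def reach (G : SimpleGraph V) (A : Set V) (x : V) : Prop :=
  ∃ a ∈ A, Nonempty (G.Walk a x)

/-- Cost set of walks from `A` to `x`. -/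
def costSet (G : SimpleGraph V) (c : Sym2 V → ℕ) (A : Set V) (x : V) : Set ℕ :=
  {m | ∃ a ∈ A, ∃ W : G.Walk a x, S c W = m}

/-- min cost from A to x. -/
def dd (G : SimpleGraph V) (c : Sym2 V → ℕ) (A : Set V) (x : V) : ℕ :=
  sInf (costSet G c A x)

variable {G : SimpleGraph V} {c : Sym2 V → ℕ} {A : Set V}

lemma costSet_nonempty (h : reach G A x) : (costSet G c A x).Nonempty := by
  obtain ⟨a, ha, ⟨W⟩⟩ := h
  exact ⟨S c W, a, ha, W, rfl⟩

lemma reach_self {a : V} (ha : a ∈ A) : reach G A a := ⟨a, ha, ⟨Walk.nil⟩⟩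

lemma reach_of_walk {x y : V} (h : reach G A x) (W : G.Walk x y) : reach G A y := by
  obtain ⟨a, ha, ⟨P⟩⟩ := h
  exact ⟨a, ha, ⟨P.append W⟩⟩

lemma dd_exists {x : V} (h : reach G A x) :
    ∃ a ∈ A, ∃ W : G.Walk a x, S c W = dd G c A x :=
  Nat.sInf_mem (costSet_nonempty h)

lemma dd_le {x a : V} (ha : a ∈ A) (W : G.Walk a x) : dd G c A x ≤ S c W :=
  Nat.sInf_le ⟨a, ha, W, rfl⟩

lemma dd_le_walk {x y : V} (h : reach G A x) (W : G.Walk x y) :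
    dd G c A y ≤ dd G c A x + S c W := by
  obtain ⟨a, ha, P, hP⟩ := dd_exists (c := c) h
  calc dd G c A y ≤ S c (P.append W) := dd_le ha _
    _ = dd G c A x + S c W := by simp [hP]

lemma dd_self {a : V} (ha : a ∈ A) : dd G c A a = 0 :=
  Nat.le_antisymm (le_of_le_of_eq (dd_le ha Walk.nil) (S_nil c)) (Nat.zero_le _)

end SSOS
namespace SSOS
open RTN SimpleGraph

variable {V : Type*} {G : SimpleGraph V} {A B C : Set V} {n : ℕ} {ρ σ : Sym2 V → ℕ}

/-- Total cost function. -/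
def cc (ρ σ : Sym2 V → ℕ) : Sym2 V → ℕ := fun e => σ e + ρ e

/-- Zero-cost closure region. -/
def VA (G : SimpleGraph V) (c : Sym2 V → ℕ) (A : Set V) : Set V :=
  {x | reach G A x ∧ dd G c A x = 0}

/-- Tight (gradient) region. -/
def Vm (G : SimpleGraph V) (c : Sym2 V → ℕ) (A B : Set V) (n : ℕ) : Set V :=
  {x | reach G A x ∧ reach G B x ∧ dd G c A x + dd G c B x + 2 ≤ 2 * n}

/-- The subgraph region `V'`. -/
def Vp (G : SimpleGraph V) (c : Sym2 V → ℕ) (A B : Set V) (n : ℕ) : Set V :=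
  VA G c A ∪ VA G c B ∪ Vm G c A B n

/-- The height function (ℕ-valued). -/
def kN (G : SimpleGraph V) (c : Sym2 V → ℕ) (A : Set V) (n : ℕ) (x : V) : ℕ :=
  if reach G A x then min (dd G c A x) (2 * (n - 1)) else 2 * (n - 1)

lemma F1 (hIP : IPfeas G A B C n ρ σ) {a b : V} (ha : a ∈ A) (hb : b ∈ B)
    (W : G.Walk a b) :
    Even (S (cc ρ σ) W) ∧ 2 * n ≤ S (cc ρ σ) W + 2 ∧
      (S ρ W ≠ 0 → 2 * n ≤ S (cc ρ σ) W) := by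
  obtain ⟨h1, h2⟩ := hIP.1 a ha b hb W
  rw [wkSum_addCast] at h1 h2
  rw [wkSum_intCast] at h2
  have hcc : S (fun e => σ e + ρ e) W = S (cc ρ σ) W := rfl
  rw [hcc] at h1 h2
  have h1' : 2 ∣ S (cc ρ σ) W := by exact_mod_cast h1
  refine ⟨even_iff_two_dvd.mpr h1', ?_, ?_⟩
  · by_cases hz : S ρ W = 0 <;> simp [hz] at h2 <;> omega
  · intro hz
    simp only [if_neg (by exact_mod_cast hz : ¬ ((S ρ W : ℤ) = 0))] at h2
    omega

lemma F2 (hIP : IPfeas G A B C n ρ σ) {a y : V} (ha : a ∈ A ∪ B) (hy : y ∈ C)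
    (W : G.Walk a y) : n ≤ S ρ W := by
  have h := hIP.2 a ha y hy W
  rw [wkSum_intCast] at h
  exact_mod_cast h

lemma rho_le_cc : ∀ e, ρ e ≤ cc ρ σ e := fun e => Nat.le_add_left _ _

lemma S_rho_le {x y : V} (W : G.Walk x y) : S ρ W ≤ S (cc ρ σ) W :=
  S_mono rho_le_cc W

end SSOS
namespace SSOS
open RTN SimpleGraph

variable {V : Type*} {G : SimpleGraph V} {A B C : Set V} {n : ℕ} {ρ σ : Sym2 V → ℕ}

lemma dd_le_adj {c : Sym2 V → ℕ} {x y : V} (h : reach G A x) (hxy : G.Adj x y) :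
    dd G c A y ≤ dd G c A x + c s(x, y) := by
  have := dd_le_walk (c := c) h (Walk.cons hxy Walk.nil)
  simpa using this

lemma reach_adj {x y : V} (h : reach G A x) (hxy : G.Adj x y) : reach G A y :=
  reach_of_walk h (Walk.cons hxy Walk.nil)

lemma A_sub_VA : A ⊆ VA G (cc ρ σ) A := fun a ha => ⟨reach_self ha, dd_self ha⟩

lemma kN_of_A {x : V} (hx : x ∈ A) : kN G (cc ρ σ) A n x = 0 := by
  unfold kN
  rw [if_pos (reach_self hx), dd_self hx]
  simp

lemma kN_le : ∀ x, kN G (cc ρ σ) A n x ≤ 2 * (n - 1) := by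
  intro x; unfold kN; split <;> omega

lemma dd_B_ge (hIP : IPfeas G A B C n ρ σ) {x : V} (hx : x ∈ B)
    (hr : reach G A x) : 2 * n ≤ dd G (cc ρ σ) A x + 2 := by
  obtain ⟨a, ha, W, hW⟩ := dd_exists (c := cc ρ σ) hr
  have := (F1 hIP ha hx W).2.1
  omega

lemma kN_of_B (hIP : IPfeas G A B C n ρ σ) (hn : 2 ≤ n) {x : V} (hx : x ∈ B) :
    kN G (cc ρ σ) A n x = 2 * (n - 1) := by
  unfold kN
  split
  · next hr => have := dd_B_ge hIP hx hr; omega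
  · rfl

lemma VB_dA (hIP : IPfeas G A B C n ρ σ) {x : V} (hx : x ∈ VA G (cc ρ σ) B)
    (hr : reach G A x) :
    2 * n ≤ dd G (cc ρ σ) A x + 2 ∧ Even (dd G (cc ρ σ) A x) := by
  obtain ⟨a, ha, P, hP⟩ := dd_exists (c := cc ρ σ) hr
  obtain ⟨b, hb, Q, hQ⟩ := dd_exists (c := cc ρ σ) hx.1
  rw [hx.2] at hQ
  have h := F1 hIP ha hb (P.append Q.reverse)
  simp only [S_append, S_reverse, hP, hQ, Nat.add_zero] at h
  exact ⟨h.2.1, h.1⟩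

lemma VA_dB (hIP : IPfeas G A B C n ρ σ) {x : V} (hx : x ∈ VA G (cc ρ σ) A)
    (hr : reach G B x) :
    2 * n ≤ dd G (cc ρ σ) B x + 2 ∧ Even (dd G (cc ρ σ) B x) := by
  obtain ⟨b, hb, P, hP⟩ := dd_exists (c := cc ρ σ) hr
  obtain ⟨a, ha, Q, hQ⟩ := dd_exists (c := cc ρ σ) hx.1
  rw [hx.2] at hQ
  have h := F1 hIP ha hb (Q.append P.reverse)
  simp only [S_append, S_reverse, hP, hQ, Nat.zero_add] at h
  exact ⟨h.2.1, h.1⟩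

lemma kN_of_VB (hIP : IPfeas G A B C n ρ σ) (hn : 2 ≤ n) {x : V}
    (hx : x ∈ VA G (cc ρ σ) B) : kN G (cc ρ σ) A n x = 2 * (n - 1) := by
  unfold kN
  split
  · next hr => have := VB_dA hIP hx hr; omega
  · rfl

lemma kN_of_VA {x : V} (hx : x ∈ VA G (cc ρ σ) A) : kN G (cc ρ σ) A n x = 0 := by
  unfold kN
  rw [if_pos hx.1, hx.2]
  simp

lemma Vm_eq (hIP : IPfeas G A B C n ρ σ) {x : V} (hx : x ∈ Vm G (cc ρ σ) A B n) :
    dd G (cc ρ σ) A x + dd G (cc ρ σ) B x + 2 = 2 * n := by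
  obtain ⟨a, ha, P, hP⟩ := dd_exists (c := cc ρ σ) hx.1
  obtain ⟨b, hb, Q, hQ⟩ := dd_exists (c := cc ρ σ) hx.2.1
  have h := (F1 hIP ha hb (P.append Q.reverse)).2.1
  simp only [S_append, S_reverse, hP, hQ] at h
  have := hx.2.2
  omega

lemma kN_of_Vm (hn : 2 ≤ n) {x : V} (hx : x ∈ Vm G (cc ρ σ) A B n) :
    kN G (cc ρ σ) A n x = dd G (cc ρ σ) A x := by
  unfold kN
  rw [if_pos hx.1]
  have := hx.2.2
  omega

lemma zero_access (hIP : IPfeas G A B C n ρ σ) {x : V}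
    (hx : x ∈ Vp G (cc ρ σ) A B n) :
    ∃ s, s ∈ A ∪ B ∧ ∃ W : G.Walk s x, S ρ W = 0 := by
  rcases hx with (hx | hx) | hx
  · obtain ⟨a, ha, P, hP⟩ := dd_exists (c := cc ρ σ) hx.1
    rw [hx.2] at hP
    refine ⟨a, Or.inl ha, P, ?_⟩
    have := S_rho_le (ρ := ρ) (σ := σ) P
    omega
  · obtain ⟨b, hb, P, hP⟩ := dd_exists (c := cc ρ σ) hx.1
    rw [hx.2] at hP
    refine ⟨b, Or.inr hb, P, ?_⟩
    have := S_rho_le (ρ := ρ) (σ := σ) P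
    omega
  · obtain ⟨a, ha, P, hP⟩ := dd_exists (c := cc ρ σ) hx.1
    obtain ⟨b, hb, Q, hQ⟩ := dd_exists (c := cc ρ σ) hx.2.1
    refine ⟨a, Or.inl ha, P, ?_⟩
    by_contra hz
    have hz' : S ρ (P.append Q.reverse) ≠ 0 := by
      simp only [S_append, S_reverse]
      omega
    have h := (F1 hIP ha hb (P.append Q.reverse)).2.2 hz'
    simp only [S_append, S_reverse, hP, hQ] at h
    have := hx.2.2
    omega

lemma CL (hIP : IPfeas G A B C n ρ σ) (hn : 2 ≤ n) {x : V}
    (hx : x ∈ Vp G (cc ρ σ) A B n) (hrA : reach G A x) (hrB : reach G B x) :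
    (dd G (cc ρ σ) A x = kN G (cc ρ σ) A n x ∨
      (dd G (cc ρ σ) B x = 0 ∧ kN G (cc ρ σ) A n x = 2 * (n - 1))) ∧
    (dd G (cc ρ σ) B x + kN G (cc ρ σ) A n x = 2 * (n - 1) ∨
      (dd G (cc ρ σ) A x = 0 ∧ kN G (cc ρ σ) A n x = 0)) := by
  rcases hx with (hx | hx) | hx
  · exact ⟨Or.inl (by rw [kN_of_VA hx, hx.2]),
      Or.inr ⟨hx.2, kN_of_VA hx⟩⟩
  · refine ⟨Or.inr ⟨hx.2, kN_of_VB hIP hn hx⟩, Or.inl ?_⟩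
    rw [kN_of_VB hIP hn hx, hx.2]
    omega
  · have h1 := Vm_eq hIP hx
    have h2 := kN_of_Vm (ρ := ρ) (σ := σ) hn hx
    exact ⟨Or.inl h2.symm, Or.inl (by omega)⟩

lemma C_not_Vp (hIP : IPfeas G A B C n ρ σ) (hn : 2 ≤ n) {x : V} (hx : x ∈ C) :
    x ∉ Vp G (cc ρ σ) A B n := by
  rintro ((h | h) | h)
  · obtain ⟨a, ha, P, hP⟩ := dd_exists (c := cc ρ σ) h.1
    rw [h.2] at hP
    have h2 := F2 hIP (Or.inl ha) hx P
    have := S_rho_le (ρ := ρ) (σ := σ) P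
    omega
  · obtain ⟨b, hb, P, hP⟩ := dd_exists (c := cc ρ σ) h.1
    rw [h.2] at hP
    have h2 := F2 hIP (Or.inr hb) hx P
    have := S_rho_le (ρ := ρ) (σ := σ) P
    omega
  · obtain ⟨a, ha, P, hP⟩ := dd_exists (c := cc ρ σ) h.1
    obtain ⟨b, hb, Q, hQ⟩ := dd_exists (c := cc ρ σ) h.2.1
    have h2 := F2 hIP (Or.inl ha) hx P
    have h3 := F2 hIP (Or.inr hb) hx Q
    have := S_rho_le (ρ := ρ) (σ := σ) P
    have := S_rho_le (ρ := ρ) (σ := σ) Q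
    have := h.2.2
    omega

lemma not_Vp_dA {z : V} (hz : z ∉ Vp G (cc ρ σ) A B n) (hr : reach G A z) :
    1 ≤ dd G (cc ρ σ) A z := by
  by_contra h
  exact hz (Or.inl (Or.inl ⟨hr, by omega⟩))

lemma not_Vp_dB {z : V} (hz : z ∉ Vp G (cc ρ σ) A B n) (hr : reach G B z) :
    1 ≤ dd G (cc ρ σ) B z := by
  by_contra h
  exact hz (Or.inl (Or.inr ⟨hr, by omega⟩))

lemma not_Vp_sum {z : V} (hz : z ∉ Vp G (cc ρ σ) A B n) (hrA : reach G A z)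
    (hrB : reach G B z) :
    2 * n ≤ dd G (cc ρ σ) A z + dd G (cc ρ σ) B z + 1 := by
  by_contra h
  exact hz (Or.inr ⟨hrA, hrB, by omega⟩)

lemma Mu1 {e : Sym2 V} (he : e ∈ mu G (Vp G (cc ρ σ) A B n)) :
    1 ≤ cc ρ σ e := by
  obtain ⟨hE, x, y, rfl, hx, hy⟩ := he
  have hadj : G.Adj x y := hE
  by_contra h
  have hc : cc ρ σ s(x, y) = 0 := by omega
  apply hy
  rcases hx with (hx | hx) | hx
  · exact Or.inl (Or.inl ⟨reach_adj hx.1 hadj,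
      by have := dd_le_adj (c := cc ρ σ) hx.1 hadj; have := hx.2; omega⟩)
  · refine Or.inl (Or.inr ⟨reach_adj hx.1 hadj, ?_⟩)
    have := dd_le_adj (c := cc ρ σ) hx.1 hadj
    have := hx.2
    omega
  · refine Or.inr ⟨reach_adj hx.1 hadj, reach_adj hx.2.1 hadj, ?_⟩
    have h1 := dd_le_adj (c := cc ρ σ) hx.1 hadj
    have h2 := dd_le_adj (c := cc ρ σ) (A := B) hx.2.1 hadj
    have := hx.2.2
    omega

lemma kN_lip {x y : V} (hxy : G.Adj x y) :
    kN G (cc ρ σ) A n y ≤ kN G (cc ρ σ) A n x + cc ρ σ s(x, y) ∧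
    kN G (cc ρ σ) A n x ≤ kN G (cc ρ σ) A n y + cc ρ σ s(x, y) := by
  by_cases hr : reach G A x
  · have hry : reach G A y := reach_adj hr hxy
    have h1 := dd_le_adj (c := cc ρ σ) hr hxy
    have h2 := dd_le_adj (c := cc ρ σ) hry hxy.symm
    rw [Sym2.eq_swap (a := y)] at h2
    unfold kN
    rw [if_pos hr, if_pos hry]
    omega
  · have hry : ¬ reach G A y := fun h => hr (reach_adj h hxy.symm)
    unfold kN
    rw [if_neg hr, if_neg hry]
    omega

end SSOS
namespace SSOS
open RTN SimpleGraph

variable {V : Type*} {G : SimpleGraph V} {A B C : Set V} {n : ℕ} {ρ σ : Sym2 V → ℕ}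

lemma split_first (Vs : Set V) {z y : V} (L : G.Walk z y) (hy : y ∈ Vs) :
    ∃ v, v ∈ Vs ∧ ∃ (W₁ : G.Walk z v) (W₂ : G.Walk v y),
      L = W₁.append W₂ ∧ ∀ t ∈ W₁.support.dropLast, t ∉ Vs := by
  induction L with
  | nil => exact ⟨_, hy, Walk.nil, Walk.nil, rfl, by simp⟩
  | @cons a b y h L ih =>
    by_cases ha : a ∈ Vs
    · exact ⟨a, ha, Walk.nil, Walk.cons h L, rfl, by simp⟩
    · obtain ⟨v, hv, W₁, W₂, hEq, hprop⟩ := ih hy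
      refine ⟨v, hv, Walk.cons h W₁, W₂, by rw [hEq, Walk.cons_append], ?_⟩
      intro t ht
      have hd : (Walk.cons h W₁).support.dropLast = a :: W₁.support.dropLast := by
        rw [Walk.support_cons]
        exact List.dropLast_cons_of_ne_nil (Walk.support_ne_nil _)
      rw [hd] at ht
      rcases List.mem_cons.mp ht with rfl | ht
      · exact ha
      · exact hprop t ht

lemma seg_shape {Vs : Set V} {z v : V} (W₁ : G.Walk z v) (hz : z ∉ Vs) (hv : v ∈ Vs)
    (hprop : ∀ t ∈ W₁.support.dropLast, t ∉ Vs) :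
    ∃ (z' : V) (W₀ : G.Walk z z') (h₂ : G.Adj z' v),
      W₁ = W₀.concat h₂ ∧ z' ∉ Vs ∧ ∀ t ∈ W₀.support, t ∉ Vs := by
  cases W₁ with
  | nil => exact absurd hv hz
  | @cons _ b _ h P =>
    obtain ⟨x, q, h', hEq⟩ := Walk.exists_cons_eq_concat h P
    have hsupp : (Walk.cons h P).support.dropLast = q.support := by
      rw [hEq, Walk.support_concat, List.dropLast_concat]
    rw [hsupp] at hprop
    exact ⟨x, q, h', hEq, hprop x q.end_mem_support, hprop⟩

lemma access_par_A (hIP : IPfeas G A B C n ρ σ) (hn : 2 ≤ n) {u : V}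
    (hu : u ∈ Vp G (cc ρ σ) A B n) (hrA : reach G A u) :
    ∃ a ∈ A, ∃ P : G.Walk a u,
      Even (S (cc ρ σ) P + kN G (cc ρ σ) A n u) := by
  obtain ⟨a, ha, P, hP⟩ := dd_exists (c := cc ρ σ) hrA
  rcases hu with (hu | hu) | hu
  · exact ⟨a, ha, P, by rw [hP, hu.2, kN_of_VA hu]; simp⟩
  · refine ⟨a, ha, P, ?_⟩
    rw [hP, kN_of_VB hIP hn hu]
    have h2 := (VB_dA hIP hu hrA).2
    rcases h2 with ⟨m, hm⟩
    exact ⟨m + (n - 1), by omega⟩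
  · exact ⟨a, ha, P, by rw [hP, kN_of_Vm hn hu]; exact ⟨dd G (cc ρ σ) A u, by omega⟩⟩

lemma access_par_B (hIP : IPfeas G A B C n ρ σ) (hn : 2 ≤ n) {u : V}
    (hu : u ∈ Vp G (cc ρ σ) A B n) (hrB : reach G B u) :
    ∃ b ∈ B, ∃ Q : G.Walk b u,
      Even (S (cc ρ σ) Q + kN G (cc ρ σ) A n u) := by
  obtain ⟨b, hb, Q, hQ⟩ := dd_exists (c := cc ρ σ) hrB
  rcases hu with (hu | hu) | hu
  · refine ⟨b, hb, Q, ?_⟩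
    rw [hQ, kN_of_VA hu]
    have h2 := (VA_dB hIP hu hrB).2
    simpa using h2
  · refine ⟨b, hb, Q, ?_⟩
    rw [hQ, hu.2, kN_of_VB hIP hn hu]
    exact ⟨n - 1, by omega⟩
  · refine ⟨b, hb, Q, ?_⟩
    rw [hQ, kN_of_Vm hn hu]
    have h1 := Vm_eq hIP hu
    exact ⟨n - 1, by omega⟩

lemma SL_par (hIP : IPfeas G A B C n ρ σ) (hn : 2 ≤ n) {u u' : V}
    (hu : u ∈ Vp G (cc ρ σ) A B n) (hu' : u' ∈ Vp G (cc ρ σ) A B n)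
    (hrA : reach G A u) (hrB : reach G B u) (M : G.Walk u u') :
    Even (S (cc ρ σ) M + kN G (cc ρ σ) A n u + kN G (cc ρ σ) A n u') := by
  have hrA' : reach G A u' := reach_of_walk hrA M
  have hrB' : reach G B u' := reach_of_walk hrB M
  obtain ⟨a, ha, P, hP⟩ := access_par_A hIP hn hu hrA
  obtain ⟨b, hb, Q, hQ⟩ := access_par_B hIP hn hu' hrB'
  have h := (F1 hIP ha hb (P.append (M.append Q.reverse))).1
  simp only [S_append, S_reverse] at h
  rw [Nat.even_iff] at *
  omega

lemma SL_mag (hIP : IPfeas G A B C n ρ σ) (hn : 2 ≤ n) {u u' z z' : V}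
    (hu : u ∈ Vp G (cc ρ σ) A B n) (hu' : u' ∈ Vp G (cc ρ σ) A B n)
    (hrA : reach G A u) (hrB : reach G B u)
    (h₁ : G.Adj u z) (W₀ : G.Walk z z') (h₂ : G.Adj z' u')
    (hz : z ∉ Vp G (cc ρ σ) A B n) (hz' : z' ∉ Vp G (cc ρ σ) A B n) :
    kN G (cc ρ σ) A n u + 2 ≤ S (cc ρ σ) (Walk.cons h₁ (W₀.concat h₂)) + kN G (cc ρ σ) A n u' ∧
    kN G (cc ρ σ) A n u' + 2 ≤ S (cc ρ σ) (Walk.cons h₁ (W₀.concat h₂)) + kN G (cc ρ σ) A n u := by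
  set c := cc ρ σ with hc
  set M := Walk.cons h₁ (W₀.concat h₂) with hM
  have hrAz : reach G A z := reach_adj hrA h₁
  have hrBz : reach G B z := reach_adj hrB h₁
  have hrAz' : reach G A z' := reach_of_walk hrAz W₀
  have hrBz' : reach G B z' := reach_of_walk hrBz W₀
  have hrAu' : reach G A u' := reach_adj hrAz' h₂
  have hrBu' : reach G B u' := reach_adj hrBz' h₂
  have hs : S c M = c s(u, z) + S c W₀ + c s(z', u') := by
    simp [hM, Nat.add_assoc]
  -- I₁ chain
  have i1a : dd G c A z' ≤ dd G c A u + (c s(u, z) + S c W₀) := by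
    have h := dd_le_walk (c := c) hrA (Walk.cons h₁ W₀)
    simp only [S_cons] at h
    omega
  have i1b : dd G c B z' ≤ dd G c B u' + c s(z', u') := by
    have := dd_le_adj (c := c) hrBu' h₂.symm
    rwa [Sym2.eq_swap] at this
  -- I₂ chain
  have i2a : dd G c A z ≤ dd G c A u' + (S c W₀ + c s(z', u')) := by
    have h := dd_le_walk (c := c) hrAu' (W₀.concat h₂).reverse
    simp only [S_reverse, S_concat] at h
    omega
  have i2b : dd G c B z ≤ dd G c B u + c s(u, z) := dd_le_adj hrB h₁
  -- edge bounds
  have e1 : dd G c A z ≤ dd G c A u + c s(u, z) := dd_le_adj hrA h₁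
  have e2 : dd G c A z' ≤ dd G c A u' + c s(z', u') := by
    have := dd_le_adj (c := c) hrAu' h₂.symm
    rwa [Sym2.eq_swap] at this
  -- positivity at z, z'
  have p1 := not_Vp_dA hz hrAz
  have p2 := not_Vp_dB hz hrBz
  have p3 := not_Vp_dA hz' hrAz'
  have p4 := not_Vp_dB hz' hrBz'
  have p5 := not_Vp_sum hz hrAz hrBz
  have p6 := not_Vp_sum hz' hrAz' hrBz'
  -- classification
  have cl1 := CL hIP hn hu hrA hrB
  have cl2 := CL hIP hn hu' hrAu' hrBu'
  have k1 := kN_le (G := G) (ρ := ρ) (σ := σ) (A := A) (n := n) u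
  have k2 := kN_le (G := G) (ρ := ρ) (σ := σ) (A := A) (n := n) u'
  -- parity
  have hpar := SL_par hIP hn hu hu' hrA hrB M
  rw [Nat.even_iff] at hpar
  obtain ⟨cl1a, cl1b⟩ := cl1
  obtain ⟨cl2a, cl2b⟩ := cl2
  rw [← hc] at *
  omega
end SSOS
namespace SSOS
open RTN SimpleGraph

variable {V : Type*} {G : SimpleGraph V} {A B C : Set V} {n : ℕ} {ρ σ : Sym2 V → ℕ}

/-- Indicator of the cut surface. -/
def muInd (G : SimpleGraph V) (Vs : Set V) : Sym2 V → ℕ :=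
  fun e => if e ∈ mu G Vs then 1 else 0

/-- The reduced-graph cost function `ϱ` (ℕ-valued). -/
def qq (G : SimpleGraph V) (c : Sym2 V → ℕ) (Vs : Set V) : Sym2 V → ℕ :=
  fun e => c e - muInd G Vs e

/-- Both-endpoints-inside predicate. -/
def insideP (Vs : Set V) (e : Sym2 V) : Prop := ∀ v ∈ e, v ∈ Vs

lemma mem_mu {x y : V} {Vs : Set V} (h : G.Adj x y) (hx : x ∈ Vs) (hy : y ∉ Vs) :
    s(x, y) ∈ mu G Vs := ⟨h, x, y, rfl, hx, hy⟩

lemma mem_mu' {x y : V} {Vs : Set V} (h : G.Adj x y) (hx : x ∉ Vs) (hy : y ∈ Vs) :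
    s(x, y) ∈ mu G Vs := ⟨h, y, x, Sym2.eq_swap, hy, hx⟩

lemma not_mem_mu_out {x y : V} {Vs : Set V} (hx : x ∉ Vs) (hy : y ∉ Vs) :
    s(x, y) ∉ mu G Vs := by
  rintro ⟨hE, a, b, hab, ha, hb⟩
  rcases Sym2.eq_iff.mp hab with ⟨rfl, rfl⟩ | ⟨rfl, rfl⟩
  · exact hx ha
  · exact hy ha

lemma not_mem_mu_in {x y : V} {Vs : Set V} (hx : x ∈ Vs) (hy : y ∈ Vs) :
    s(x, y) ∉ mu G Vs := by
  rintro ⟨hE, a, b, hab, ha, hb⟩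
  rcases Sym2.eq_iff.mp hab with ⟨rfl, rfl⟩ | ⟨rfl, rfl⟩
  · exact hb hy
  · exact hb hx

lemma edges_not_mu_of_support {Vs : Set V} {a b : V} {W : G.Walk a b}
    (hsup : ∀ t ∈ W.support, t ∉ Vs) : ∀ e ∈ W.edges, muInd G Vs e = 0 := by
  intro e he
  unfold muInd
  rw [if_neg]
  intro hmu
  obtain ⟨hE, p, q, rfl, hp, hq⟩ := hmu
  exact hsup p (W.fst_mem_support_of_mem_edges he) hp

lemma qq_mu {e : Sym2 V} (he : e ∈ mu G (Vp G (cc ρ σ) A B n)) :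
    qq G (cc ρ σ) (Vp G (cc ρ σ) A B n) e + 1 = cc ρ σ e := by
  have h1 := Mu1 he
  unfold qq muInd
  rw [if_pos he]
  omega

lemma qq_not_mu {Vs : Set V} {c : Sym2 V → ℕ} {e : Sym2 V} (he : e ∉ mu G Vs) :
    qq G c Vs e = c e := by
  unfold qq muInd
  rw [if_neg he]
  omega

lemma not_inside {x z : V} {Vs : Set V} (hx : x ∈ Vs)
    (h : ¬ insideP Vs s(x, z)) : z ∉ Vs := by
  intro hz
  exact h (by intro v hv; rcases Sym2.mem_iff.mp hv with rfl | rfl <;> assumption)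

lemma kN_eq_of_unreach (hIP : IPfeas G A B C n ρ σ) (hn : 2 ≤ n) {x y : V}
    (hx : x ∈ Vp G (cc ρ σ) A B n) (hy : y ∈ Vp G (cc ρ σ) A B n) (W : G.Walk x y)
    (h : ¬ (reach G A x ∧ reach G B x)) :
    kN G (cc ρ σ) A n x = kN G (cc ρ σ) A n y := by
  by_cases hrA : reach G A x
  · have hrB : ¬ reach G B x := fun hb => h ⟨hrA, hb⟩
    have hrBy : ¬ reach G B y := fun hb => hrB (reach_of_walk hb W.reverse)
    have hxA : x ∈ VA G (cc ρ σ) A := by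
      rcases hx with (hx | hx) | hx
      · exact hx
      · exact absurd hx.1 hrB
      · exact absurd hx.2.1 hrB
    have hyA : y ∈ VA G (cc ρ σ) A := by
      rcases hy with (hy | hy) | hy
      · exact hy
      · exact absurd hy.1 hrBy
      · exact absurd hy.2.1 hrBy
    rw [kN_of_VA hxA, kN_of_VA hyA]
  · have hrAy : ¬ reach G A y := fun hb => hrA (reach_of_walk hb W.reverse)
    have hxB : x ∈ VA G (cc ρ σ) B := by
      rcases hx with (hx | hx) | hx
      · exact absurd hx.1 hrA
      · exact hx
      · exact absurd hx.1 hrA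
    have hyB : y ∈ VA G (cc ρ σ) B := by
      rcases hy with (hy | hy) | hy
      · exact absurd hy.1 hrAy
      · exact hy
      · exact absurd hy.1 hrAy
    rw [kN_of_VB hIP hn hxB, kN_of_VB hIP hn hyB]

lemma MG (hIP : IPfeas G A B C n ρ σ) (hn : 2 ≤ n) : ∀ (N : ℕ) {x y : V}
    (L : G.Walk x y), L.length ≤ N →
    x ∈ Vp G (cc ρ σ) A B n → y ∈ Vp G (cc ρ σ) A B n →
    (∀ e ∈ L.edges, ¬ insideP (Vp G (cc ρ σ) A B n) e) →
    kN G (cc ρ σ) A n x ≤ S (qq G (cc ρ σ) (Vp G (cc ρ σ) A B n)) L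
        + kN G (cc ρ σ) A n y ∧
    kN G (cc ρ σ) A n y ≤ S (qq G (cc ρ σ) (Vp G (cc ρ σ) A B n)) L
        + kN G (cc ρ σ) A n x := by
  set c := cc ρ σ with hcdef
  set Vs := Vp G (cc ρ σ) A B n with hVdef
  intro N
  induction N with
  | zero =>
    intro x y L hlen hx hy hins
    cases L with
    | nil => simp
    | cons h L => simp at hlen
  | succ N ih =>
    intro x y L hlen hx hy hins
    cases L with
    | nil => simp
    | @cons x z y h₁ L₂ =>
      have hz : z ∉ Vs := not_inside hx (hins _ (by simp))
      obtain ⟨v, hv, W₁, W₂, hEq, hprop⟩ := split_first Vs L₂ hy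
      obtain ⟨z', W₀, h₂, hW₁eq, hz', hW₀⟩ := seg_shape W₁ hz hv hprop
      have hLeq : Walk.cons h₁ L₂ = (Walk.cons h₁ (W₀.concat h₂)).append W₂ := by
        rw [hEq, hW₁eq, Walk.cons_append]
      set M := Walk.cons h₁ (W₀.concat h₂) with hM
      -- qq sums
      have hq1 : qq G c Vs s(x, z) + 1 = c s(x, z) := qq_mu (mem_mu h₁ hx hz)
      have hq2 : qq G c Vs s(z', v) + 1 = c s(z', v) := qq_mu (mem_mu' h₂ hz' hv)
      have hq0 : S (qq G c Vs) W₀ = S c W₀ := by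
        refine S_congr _ (fun e he => ?_)
        exact qq_not_mu (by
          intro hmu
          have := edges_not_mu_of_support (G := G) (Vs := Vs) hW₀ e he
          unfold muInd at this
          rw [if_pos hmu] at this
          omega)
      have hSM : S (qq G c Vs) M + 2 = S c M := by
        simp only [hM, S_cons, S_concat, hq0]
        omega
      -- IH on W₂
      have hlen2 : W₂.length ≤ N := by
        have : (Walk.cons h₁ L₂).length = L₂.length + 1 := by simp
        have h3 : L₂.length = W₁.length + W₂.length := by
          rw [hEq]; simp [Walk.length_append]
        have h4 : W₁.length = W₀.length + 1 := by rw [hW₁eq]; simp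
        omega
      have hins2 : ∀ e ∈ W₂.edges, ¬ insideP Vs e := by
        intro e he
        refine hins e ?_
        rw [hEq]
        simp only [Walk.edges_cons, Walk.edges_append, List.mem_cons, List.mem_append]
        exact Or.inr (Or.inr he)
      have hIH := ih W₂ hlen2 hv hy hins2
      have hLsum : S (qq G c Vs) (Walk.cons h₁ L₂) =
          S (qq G c Vs) M + S (qq G c Vs) W₂ := by
        rw [hLeq, S_append]
      by_cases hreach : reach G A x ∧ reach G B x
      · have hSL := SL_mag hIP hn hx hv hreach.1 hreach.2 h₁ W₀ h₂ hz hz'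
        rw [← hcdef] at hSL
        rw [← hM] at hSL
        constructor <;> omega
      · have hkeq : kN G c A n x = kN G c A n v :=
          kN_eq_of_unreach hIP hn hx hv (Walk.cons h₁ (W₀.concat h₂)) hreach
        constructor <;> omega

lemma MC (hIP : IPfeas G A B C n ρ σ) (hn : 2 ≤ n) {x y : V} (L : G.Walk x y)
    (hx : x ∈ Vp G (cc ρ σ) A B n) (hy : y ∈ C) :
    n ≤ S (qq G (cc ρ σ) (Vp G (cc ρ σ) A B n)) L + 1 := by
  set c := cc ρ σ with hcdef
  set Vs := Vp G (cc ρ σ) A B n with hVdef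
  have hyV : y ∉ Vs := C_not_Vp hIP hn hy
  obtain ⟨v, hv, W₁, W₂, hEq, hprop⟩ := split_first Vs L.reverse hx
  obtain ⟨z', W₀, h₂, hW₁eq, hz', hW₀⟩ := seg_shape W₁ hyV hv hprop
  -- ρ-cost of W₁ is at least n
  obtain ⟨s, hs, Z, hZ⟩ := zero_access hIP hv
  have hF2 := F2 hIP hs hy (Z.append W₁.reverse)
  rw [S_append, S_reverse, hZ, Nat.zero_add] at hF2
  have hρc : S ρ W₁ ≤ S c W₁ := S_rho_le W₁
  -- qq-cost of W₁
  have hq2 : qq G c Vs s(z', v) + 1 = c s(z', v) := qq_mu (mem_mu' h₂ hz' hv)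
  have hq0 : S (qq G c Vs) W₀ = S c W₀ := by
    refine S_congr _ (fun e he => ?_)
    exact qq_not_mu (by
      intro hmu
      have := edges_not_mu_of_support (G := G) (Vs := Vs) hW₀ e he
      unfold muInd at this
      rw [if_pos hmu] at this
      omega)
  have hW₁c : S c W₁ = S c W₀ + c s(z', v) := by rw [hW₁eq, S_concat]
  have hW₁q : S (qq G c Vs) W₁ = S (qq G c Vs) W₀ + qq G c Vs s(z', v) := by
    rw [hW₁eq, S_concat]
  have hLsum : S (qq G c Vs) W₁ ≤ S (qq G c Vs) L := by
    have : S (qq G c Vs) L = S (qq G c Vs) W₁ + S (qq G c Vs) W₂ := by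
      rw [← S_reverse (f := qq G c Vs) L, hEq, S_append]
    omega
  omega
end SSOS
namespace SSOS
open RTN SimpleGraph

variable {V : Type*} {G : SimpleGraph V} {A B C : Set V} {n : ℕ} {ρ σ : Sym2 V → ℕ}

/-- The gradient edge function `|k(x) - k(y)|`. -/
def kDiff (G : SimpleGraph V) (c : Sym2 V → ℕ) (A : Set V) (n : ℕ) : Sym2 V → ℕ :=
  Sym2.lift ⟨fun x y => ((kN G c A n x : ℤ) - kN G c A n y).natAbs,
    fun x y => by dsimp only; omega⟩

lemma kDiff_eval {x y : V} {c : Sym2 V → ℕ} :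
    kDiff G c A n s(x, y) = ((kN G c A n x : ℤ) - kN G c A n y).natAbs := rfl

/-- The modified `σ`. -/
def sig' (G : SimpleGraph V) (A B : Set V) (n : ℕ) (ρ σ : Sym2 V → ℕ) :
    Sym2 V → ℕ :=
  fun e => if insideP (Vp G (cc ρ σ) A B n) e then kDiff G (cc ρ σ) A n e else σ e

/-- The modified `ρ`. -/
def rho' (G : SimpleGraph V) (A B : Set V) (n : ℕ) (ρ σ : Sym2 V → ℕ) :
    Sym2 V → ℕ :=
  fun e => if insideP (Vp G (cc ρ σ) A B n) e then 0 else ρ e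

lemma cc'_eq (e : Sym2 V) :
    cc (rho' G A B n ρ σ) (sig' G A B n ρ σ) e =
      if insideP (Vp G (cc ρ σ) A B n) e then kDiff G (cc ρ σ) A n e
      else cc ρ σ e := by
  show sig' G A B n ρ σ e + rho' G A B n ρ σ e = _
  unfold sig' rho'
  by_cases h : insideP (Vp G (cc ρ σ) A B n) e
  · rw [if_pos h, if_pos h, if_pos h]
    omega
  · rw [if_neg h, if_neg h, if_neg h]
    rfl

lemma not_insideP_of_mem {Vs : Set V} {e : Sym2 V} {a : V} (ha : a ∈ e)
    (haV : a ∉ Vs) : ¬ insideP Vs e := fun h => haV (h a ha)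

lemma insideP_mk {Vs : Set V} {x y : V} :
    insideP Vs s(x, y) ↔ x ∈ Vs ∧ y ∈ Vs := by
  constructor
  · intro h; exact ⟨h x (by simp), h y (by simp)⟩
  · rintro ⟨hx, hy⟩ v hv
    rcases Sym2.mem_iff.mp hv with rfl | rfl <;> assumption

lemma edges_not_inside_of_support {Vs : Set V} {a b : V} {W : G.Walk a b}
    (hsup : ∀ t ∈ W.support, t ∉ Vs) : ∀ e ∈ W.edges, ¬ insideP Vs e := by
  intro e he
  induction e using Sym2.ind with
  | _ p q =>
    exact not_insideP_of_mem (Sym2.mem_mk_left p q)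
      (hsup p (W.fst_mem_support_of_mem_edges he))

lemma cc'_outside {e : Sym2 V} (h : ¬ insideP (Vp G (cc ρ σ) A B n) e) :
    cc (rho' G A B n ρ σ) (sig' G A B n ρ σ) e = cc ρ σ e := by
  rw [cc'_eq, if_neg h]

lemma rho'_outside {e : Sym2 V} (h : ¬ insideP (Vp G (cc ρ σ) A B n) e) :
    rho' G A B n ρ σ e = ρ e := by
  unfold rho'; rw [if_neg h]

lemma QL (hIP : IPfeas G A B C n ρ σ) (hn : 2 ≤ n) : ∀ (N : ℕ) {x y : V}
    (L : G.Walk x y), L.length ≤ N →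
    x ∈ Vp G (cc ρ σ) A B n → y ∈ Vp G (cc ρ σ) A B n →
    reach G A x → reach G B x →
    (Even (S (cc (rho' G A B n ρ σ) (sig' G A B n ρ σ)) L + kN G (cc ρ σ) A n x
        + kN G (cc ρ σ) A n y) ∧
     (kN G (cc ρ σ) A n x ≤ S (cc (rho' G A B n ρ σ) (sig' G A B n ρ σ)) L
        + kN G (cc ρ σ) A n y ∧
      kN G (cc ρ σ) A n y ≤ S (cc (rho' G A B n ρ σ) (sig' G A B n ρ σ)) L
        + kN G (cc ρ σ) A n x)) ∧
    (S (rho' G A B n ρ σ) L ≠ 0 →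
      kN G (cc ρ σ) A n x + 2 ≤ S (cc (rho' G A B n ρ σ) (sig' G A B n ρ σ)) L
        + kN G (cc ρ σ) A n y ∧
      kN G (cc ρ σ) A n y + 2 ≤ S (cc (rho' G A B n ρ σ) (sig' G A B n ρ σ)) L
        + kN G (cc ρ σ) A n x) := by
  intro N
  induction N with
  | zero =>
    intro x y L hlen hx hy hrA hrB
    cases L with
    | nil =>
      refine ⟨⟨?_, by simp, by simp⟩, by simp⟩
      rw [Nat.even_iff]
      simp only [S_nil]
      omega
    | cons h L => simp at hlen
  | succ N ih =>
    intro x y L hlen hx hy hrA hrB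
    cases L with
    | nil =>
      refine ⟨⟨?_, by simp, by simp⟩, by simp⟩
      rw [Nat.even_iff]
      simp only [S_nil]
      omega
    | @cons x z y h₁ L₂ =>
      by_cases hz : z ∈ Vp G (cc ρ σ) A B n
      · -- type I edge
        have hins : insideP (Vp G (cc ρ σ) A B n) s(x, z) := insideP_mk.mpr ⟨hx, hz⟩
        have hc'1 : cc (rho' G A B n ρ σ) (sig' G A B n ρ σ) s(x, z)
            = kDiff G (cc ρ σ) A n s(x, z) := by
          rw [cc'_eq, if_pos hins]
        have hr'1 : rho' G A B n ρ σ s(x, z) = 0 := by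
          unfold rho'; rw [if_pos hins]
        have hrAz : reach G A z := reach_adj hrA h₁
        have hrBz : reach G B z := reach_adj hrB h₁
        have hIH := ih L₂ (by simp at hlen; omega) hz hy hrAz hrBz
        have hK : kDiff G (cc ρ σ) A n s(x, z)
            = ((kN G (cc ρ σ) A n x : ℤ) - kN G (cc ρ σ) A n z).natAbs := kDiff_eval
        obtain ⟨⟨hpar, hm1, hm2⟩, hth⟩ := hIH
        rw [Nat.even_iff] at hpar ⊢
        refine ⟨⟨?_, ?_, ?_⟩, ?_⟩
        · simp only [S_cons, hc'1]
          omega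
        · simp only [S_cons, hc'1]
          omega
        · simp only [S_cons, hc'1]
          omega
        · intro hne
          simp only [S_cons, hr'1, Nat.zero_add] at hne
          have h9 := hth hne
          simp only [S_cons, hc'1]
          omega
      · -- type II segment
        obtain ⟨v, hv, W₁, W₂, hEq, hprop⟩ := split_first (Vp G (cc ρ σ) A B n) L₂ hy
        obtain ⟨z', W₀, h₂, hW₁eq, hz', hW₀⟩ := seg_shape W₁ hz hv hprop
        have hLeq : Walk.cons h₁ L₂ = (Walk.cons h₁ (W₀.concat h₂)).append W₂ := by
          rw [hEq, hW₁eq, Walk.cons_append]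
        have hMnoin : ∀ e ∈ (Walk.cons h₁ (W₀.concat h₂)).edges,
            ¬ insideP (Vp G (cc ρ σ) A B n) e := by
          intro e he
          simp only [Walk.edges_cons, Walk.edges_concat, List.concat_eq_append,
            List.mem_cons, List.mem_append, List.mem_singleton, List.not_mem_nil, or_false] at he
          rcases he with rfl | he | rfl
          · exact not_insideP_of_mem (Sym2.mem_mk_right x z) hz
          · exact edges_not_inside_of_support hW₀ e he
          · exact not_insideP_of_mem (Sym2.mem_mk_left z' v) hz'
        have hSM : S (cc (rho' G A B n ρ σ) (sig' G A B n ρ σ))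
              (Walk.cons h₁ (W₀.concat h₂)) = S (cc ρ σ) (Walk.cons h₁ (W₀.concat h₂)) :=
          S_congr _ (fun e he => cc'_outside (hMnoin e he))
        have hSL := SL_mag hIP hn hx hv hrA hrB h₁ W₀ h₂ hz hz'
        have hpar := SL_par hIP hn hx hv hrA hrB (Walk.cons h₁ (W₀.concat h₂))
        have hrAv : reach G A v := reach_of_walk hrA (Walk.cons h₁ (W₀.concat h₂))
        have hrBv : reach G B v := reach_of_walk hrB (Walk.cons h₁ (W₀.concat h₂))
        have hlen2 : W₂.length ≤ N := by
          have h3 : L₂.length = W₁.length + W₂.length := by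
            rw [hEq]; simp [Walk.length_append]
          have h4 : W₁.length = W₀.length + 1 := by rw [hW₁eq]; simp
          simp at hlen
          omega
        obtain ⟨⟨hpar2, hm1, hm2⟩, _⟩ := ih W₂ hlen2 hv hy hrAv hrBv
        have hLsum : S (cc (rho' G A B n ρ σ) (sig' G A B n ρ σ)) (Walk.cons h₁ L₂)
            = S (cc (rho' G A B n ρ σ) (sig' G A B n ρ σ)) (Walk.cons h₁ (W₀.concat h₂))
              + S (cc (rho' G A B n ρ σ) (sig' G A B n ρ σ)) W₂ := by
          rw [hLeq, S_append]
        rw [Nat.even_iff] at hpar hpar2 ⊢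
        refine ⟨⟨?_, ?_, ?_⟩, fun hne => ⟨?_, ?_⟩⟩ <;> omega

lemma IPfeas_mod (hIP : IPfeas G A B C n ρ σ) (hn : 2 ≤ n) :
    IPfeas G A B C n (rho' G A B n ρ σ) (sig' G A B n ρ σ) := by
  constructor
  · intro x hx y hy L
    have hxV : x ∈ Vp G (cc ρ σ) A B n := Or.inl (Or.inl (A_sub_VA hx))
    have hyV : y ∈ Vp G (cc ρ σ) A B n := Or.inl (Or.inr ⟨reach_self hy, dd_self hy⟩)
    have hrA : reach G A x := reach_self hx
    have hrB : reach G B x := ⟨y, hy, ⟨L.reverse⟩⟩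
    have hQ := QL hIP hn L.length L le_rfl hxV hyV hrA hrB
    rw [kN_of_A (n := n) hx, kN_of_B hIP hn hy] at hQ
    obtain ⟨⟨hpar, hm1, hm2⟩, hth⟩ := hQ
    have hwk : wkSum (fun e => (sig' G A B n ρ σ e : ℤ) + (rho' G A B n ρ σ e : ℤ)) L
        = ((S (cc (rho' G A B n ρ σ) (sig' G A B n ρ σ)) L : ℕ) : ℤ) :=
      wkSum_addCast _ _ L
    have hwkr : wkSum (fun e => (rho' G A B n ρ σ e : ℤ)) L
        = ((S (rho' G A B n ρ σ) L : ℕ) : ℤ) := wkSum_intCast _ L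
    rw [hwk, hwkr]
    constructor
    · rw [Nat.even_iff] at hpar
      have h8 : S (cc (rho' G A B n ρ σ) (sig' G A B n ρ σ)) L % 2 = 0 := by omega
      omega
    · split
      · next hzero =>
          have : S (rho' G A B n ρ σ) L = 0 := by exact_mod_cast hzero
          omega
      · next hzero =>
          have hne : S (rho' G A B n ρ σ) L ≠ 0 := by
            intro h0
            exact hzero (by rw [h0]; rfl)
          have h9 := hth hne
          omega
  · intro x hx y hy L
    have hxV : x ∈ Vp G (cc ρ σ) A B n := by
      rcases hx with hx | hx
      · exact Or.inl (Or.inl (A_sub_VA hx))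
      · exact Or.inl (Or.inr ⟨reach_self hx, dd_self hx⟩)
    have hyV : y ∉ Vp G (cc ρ σ) A B n := C_not_Vp hIP hn hy
    obtain ⟨v, hv, W₁, W₂, hEq, hprop⟩ := split_first (Vp G (cc ρ σ) A B n) L.reverse hxV
    obtain ⟨z', W₀, h₂, hW₁eq, hz', hW₀⟩ := seg_shape W₁ hyV hv hprop
    obtain ⟨s, hs, Z, hZ⟩ := zero_access hIP hv
    have hF2 := F2 hIP hs hy (Z.append W₁.reverse)
    rw [S_append, S_reverse, hZ, Nat.zero_add] at hF2
    have hW₁r : S (rho' G A B n ρ σ) W₁ = S ρ W₁ := by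
      refine S_congr _ (fun e he => ?_)
      refine rho'_outside ?_
      rw [hW₁eq] at he
      simp only [Walk.edges_concat, List.concat_eq_append, List.mem_append,
        List.mem_singleton, List.mem_cons, List.not_mem_nil, or_false] at he
      rcases he with he | rfl
      · exact edges_not_inside_of_support hW₀ e he
      · exact not_insideP_of_mem (Sym2.mem_mk_left z' v) hz'
    have hsum : S (rho' G A B n ρ σ) W₁ ≤ S (rho' G A B n ρ σ) L := by
      have h5 : S (rho' G A B n ρ σ) L
          = S (rho' G A B n ρ σ) W₁ + S (rho' G A B n ρ σ) W₂ := by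
        rw [← S_reverse (f := rho' G A B n ρ σ) L, hEq, S_append]
      omega
    have hwkr : wkSum (fun e => (rho' G A B n ρ σ e : ℤ)) L
        = ((S (rho' G A B n ρ σ) L : ℕ) : ℤ) := wkSum_intCast _ L
    rw [hwkr]
    have h7 : n ≤ S (rho' G A B n ρ σ) L := by omega
    exact_mod_cast h7
end SSOS
namespace SSOS
open RTN SimpleGraph

variable {V : Type*} {G : SimpleGraph V} {A B C : Set V} {n : ℕ}

lemma S_const {x y : V} (m : ℕ) (L : G.Walk x y) :
    S (fun _ => m) L = m * L.length := by
  induction L with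
  | nil => simp
  | cons h L ih => simp only [S_cons, ih, Walk.length_cons]; ring

lemma length_pos_of_ne {x y : V} (L : G.Walk x y) (h : x ≠ y) : 1 ≤ L.length := by
  cases L with
  | nil => exact absurd rfl h
  | cons h L => simp

lemma const_feas (hbdy : Bdy A B C) (hn : 2 ≤ n) :
    IPfeas G A B C n (fun _ => n) (fun _ => n) := by
  constructor
  · intro x hx y hy L
    have hxy : x ≠ y := by
      rintro rfl
      exact (Set.disjoint_left.mp hbdy.1 hx) hy
    have hlen := length_pos_of_ne L hxy
    have h1 : wkSum (fun e => ((n : ℕ) : ℤ) + ((n : ℕ) : ℤ)) L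
        = ((S (fun _ => n + n) L : ℕ) : ℤ) := wkSum_addCast _ _ L
    have h2 : wkSum (fun e => ((n : ℕ) : ℤ)) L
        = ((S (fun _ => n) L : ℕ) : ℤ) := wkSum_intCast _ L
    rw [h1, h2, S_const, S_const]
    have h3 : n * 1 ≤ n * L.length := Nat.mul_le_mul_left n hlen
    have h4 : (n + n) * L.length = 2 * (n * L.length) := by ring
    constructor
    · omega
    · split <;> omega
  · intro x hx y hy L
    have hxy : x ≠ y := by
      rintro rfl
      rcases hx with hx | hx
      · exact (Set.disjoint_left.mp hbdy.2.1 hx) hy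
      · exact (Set.disjoint_left.mp hbdy.2.2 hx) hy
    have hlen := length_pos_of_ne L hxy
    have h2 : wkSum (fun e => ((n : ℕ) : ℤ)) L
        = ((S (fun _ => n) L : ℕ) : ℤ) := wkSum_intCast _ L
    rw [h2, S_const]
    have h3 : n * 1 ≤ n * L.length := Nat.mul_le_mul_left n hlen
    omega

variable [Fintype V]

lemma IPobj_nonneg {w : Sym2 V → ℝ} (hw : ∀ e, 0 ≤ w e) (ρ σ : Sym2 V → ℕ) :
    0 ≤ IPobj G w ρ σ := by
  refine Finset.sum_nonneg (fun e he => ?_)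
  have h1 : (0 : ℝ) ≤ (σ e : ℝ) + (ρ e : ℝ) := by positivity
  exact mul_nonneg (hw e) h1

/-- Attainment of the integer-program optimum. -/
lemma exists_opt (G : SimpleGraph V) (w : Sym2 V → ℝ) (hw : ∀ e, 0 ≤ w e)
    (hbdy : Bdy A B C) (hn : 2 ≤ n) :
    ∃ ρ σ : Sym2 V → ℕ, IPfeas G A B C n ρ σ ∧ IPobj G w ρ σ = Ival G w A B C n := by
  classical
  set SS : Set ℝ :=
    {a | ∃ ρ σ : Sym2 V → ℕ, IPfeas G A B C n ρ σ ∧ a = IPobj G w ρ σ} with hSS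
  set s₀ : ℝ := IPobj G w (fun _ => n) (fun _ => n) with hs₀
  have hs₀mem : s₀ ∈ SS := ⟨_, _, const_feas hbdy hn, rfl⟩
  have hs₀nn : 0 ≤ s₀ := IPobj_nonneg hw _ _
  -- choose the bound K
  set F : Finset (Sym2 V) :=
    Finset.univ.filter (fun e => e ∈ G.edgeSet ∧ 0 < w e) with hF
  have hKex : ∃ K : ℕ, ∀ (ρ σ : Sym2 V → ℕ), IPfeas G A B C n ρ σ →
      IPobj G w ρ σ ≤ s₀ → ∀ e ∈ F, σ e + ρ e ≤ K := by
    rcases Finset.eq_empty_or_nonempty F with hFe | hFne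
    · exact ⟨0, fun ρ σ _ _ e he => by rw [hFe] at he; simp at he⟩
    · set ε : ℝ := (F.image w).min' (hFne.image w) with hε
      have hεpos : 0 < ε := by
        have h0 := (F.image w).min'_mem (hFne.image w)
        rw [← hε] at h0
        obtain ⟨e, he, hwe⟩ := Finset.mem_image.mp h0
        have h1 := (Finset.mem_filter.mp he).2.2
        rw [← hwe]
        exact h1
      refine ⟨⌈s₀ / ε⌉₊, fun ρ σ hfeas hobj e he => ?_⟩
      obtain ⟨heE, hwe⟩ := (Finset.mem_filter.mp he).2
      have hterm : w e * ((σ e : ℝ) + (ρ e : ℝ)) ≤ IPobj G w ρ σ := by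
        refine Finset.single_le_sum (f := fun e => w e * ((σ e : ℝ) + (ρ e : ℝ)))
          (fun i _ => mul_nonneg (hw i) (by positivity)) ?_
        simp [heE]
      have hεle : ε ≤ w e := Finset.min'_le _ _ (Finset.mem_image_of_mem w he)
      have hbound : ((σ e + ρ e : ℕ) : ℝ) ≤ s₀ / ε := by
        rw [le_div_iff₀ hεpos]
        have hcast : ((σ e + ρ e : ℕ) : ℝ) = (σ e : ℝ) + ρ e := by push_cast; ring
        rw [hcast]
        have h5 : ((σ e : ℝ) + ρ e) * ε ≤ ((σ e : ℝ) + ρ e) * w e :=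
          mul_le_mul_of_nonneg_left hεle (by positivity)
        nlinarith [hterm, hobj]
      have := hbound.trans (Nat.le_ceil _)
      exact_mod_cast this
  obtain ⟨K, hK⟩ := hKex
  -- the image set
  set T : Set ℝ :=
    (fun f : Sym2 V → Fin (K + 1) => wsum (fun e => w e * ((f e : ℕ) : ℝ)) G.edgeSet)
      '' Set.univ with hT
  have hTfin : T.Finite := Set.Finite.image _ (Set.finite_univ)
  have hsub : SS ∩ Set.Iic s₀ ⊆ T := by
    rintro a ⟨⟨ρ, σ, hfeas, rfl⟩, ha⟩
    refine ⟨fun e => ⟨min (σ e + ρ e) K, by omega⟩, Set.mem_univ _, ?_⟩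
    unfold IPobj wsum
    refine (Finset.sum_congr rfl (fun e he => ?_)).symm
    dsimp only
    simp only [Finset.mem_filter, Finset.mem_univ, true_and] at he
    have heE : e ∈ G.edgeSet := he
    rcases lt_or_eq_of_le (hw e) with hwe | hwe
    · have hle : σ e + ρ e ≤ K :=
        hK ρ σ hfeas (Set.mem_Iic.mp ha) e
          (Finset.mem_filter.mpr ⟨Finset.mem_univ _, heE, hwe⟩)
      have hmineq : min (σ e + ρ e) K = σ e + ρ e := min_eq_left hle
      rw [hmineq]
      push_cast
      ring
    · rw [← hwe]
      ring
  have hS'fin : (SS ∩ Set.Iic s₀).Finite := hTfin.subset hsub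
  have hS'ne : (SS ∩ Set.Iic s₀).Nonempty := ⟨s₀, hs₀mem, Set.mem_Iic.mpr le_rfl⟩
  obtain ⟨m, hm, hmin⟩ := hS'fin.exists_minimalFor id _ hS'ne
  have hleast : IsLeast SS m := by
    refine ⟨hm.1, fun a ha => ?_⟩
    by_cases hle : a ≤ s₀
    · rcases le_total m a with h | h
      · exact h
      · exact hmin ⟨ha, hle⟩ h
    · have h1 : m ≤ s₀ := hm.2
      linarith
  obtain ⟨ρ, σ, hfeas, heq⟩ := hm.1
  refine ⟨ρ, σ, hfeas, ?_⟩
  rw [← heq]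
  unfold Ival
  rw [← hSS]
  exact hleast.csInf_eq.symm
end SSOS
namespace SSOS
open RTN SimpleGraph

variable {V : Type*} {G : SimpleGraph V} {A B C : Set V} {n : ℕ} {ρ σ : Sym2 V → ℕ}

lemma red_edge_iff {Vs : Set V} {e : Sym2 V} :
    e ∈ (reducedGraph G Vs).edgeSet ↔ e ∈ G.edgeSet ∧ ¬ insideP Vs e := by
  induction e using Sym2.ind with
  | _ x y =>
    rw [SimpleGraph.mem_edgeSet, SimpleGraph.mem_edgeSet]
    constructor
    · intro h
      have h' : G.Adj x y ∧ ¬ (x ∈ Vs ∧ y ∈ Vs) := h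
      exact ⟨h'.1, fun hin => h'.2 (insideP_mk.mp hin)⟩
    · rintro ⟨h1, h2⟩
      exact ⟨h1, fun hin => h2 (insideP_mk.mpr hin)⟩

lemma mu_sub_red {Vs : Set V} {e : Sym2 V} (he : e ∈ mu G Vs) :
    e ∈ (reducedGraph G Vs).edgeSet := by
  rw [red_edge_iff]
  obtain ⟨hE, x, y, rfl, hx, hy⟩ := he
  exact ⟨hE, not_insideP_of_mem (Sym2.mem_mk_right x y) hy⟩

lemma S_transfer {H : SimpleGraph V} {x y : V} (f : Sym2 V → ℕ) (L : H.Walk x y)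
    (h : ∀ e ∈ L.edges, e ∈ G.edgeSet) :
    S f (L.transfer G h) = S f L := by
  unfold S
  rw [Walk.edges_transfer]

lemma kDiff_le {e : Sym2 V} (he : e ∈ G.edgeSet) :
    kDiff G (cc ρ σ) A n e ≤ cc ρ σ e := by
  induction e using Sym2.ind with
  | _ x y =>
    have hadj : G.Adj x y := he
    have h := kN_lip (n := n) (ρ := ρ) (σ := σ) (A := A) hadj
    rw [kDiff_eval]
    omega

lemma cc'_le {e : Sym2 V} (he : e ∈ G.edgeSet) :
    cc (rho' G A B n ρ σ) (sig' G A B n ρ σ) e ≤ cc ρ σ e := by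
  rw [cc'_eq]
  split
  · exact kDiff_le he
  · exact le_rfl

lemma qq_cast (e : Sym2 V) :
    ((qq G (cc ρ σ) (Vp G (cc ρ σ) A B n) e : ℕ) : ℝ)
      = ((cc ρ σ e : ℕ) : ℝ) - ((muInd G (Vp G (cc ρ σ) A B n) e : ℕ) : ℝ) := by
  by_cases h : e ∈ mu G (Vp G (cc ρ σ) A B n)
  · have h1 := Mu1 (ρ := ρ) (σ := σ) h
    have h2 : muInd G (Vp G (cc ρ σ) A B n) e = 1 := by unfold muInd; rw [if_pos h]
    have h3 : qq G (cc ρ σ) (Vp G (cc ρ σ) A B n) e + 1 = cc ρ σ e := qq_mu h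
    rw [h2, ← h3]
    push_cast
    ring
  · have h2 : muInd G (Vp G (cc ρ σ) A B n) e = 0 := by unfold muInd; rw [if_neg h]
    have h3 : qq G (cc ρ σ) (Vp G (cc ρ σ) A B n) e = cc ρ σ e := qq_not_mu h
    rw [h2, h3]
    simp

/-- Feasibility for the `M`-problem of the reduced cost function. -/
lemma Mfeas_final (hIP : IPfeas G A B C n ρ σ) (hn : 2 ≤ n) :
    Mfeas (reducedGraph G (Vp G (cc ρ σ) A B n))
      (fun k => {x | x ∈ Vp G (cc ρ σ) A B n ∧ (∃ y, G.Adj x y ∧ y ∉ Vp G (cc ρ σ) A B n)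
        ∧ ((kN G (cc ρ σ) A n x : ℤ) = (k : ℤ))})
      (2 * (n - 1)) C
      (fun e => ((qq G (cc ρ σ) (Vp G (cc ρ σ) A B n) e : ℕ) : ℚ)) := by
  refine ⟨fun e => ⟨2 * qq G (cc ρ σ) (Vp G (cc ρ σ) A B n) e, by push_cast; ring⟩, ?_, ?_⟩
  · rintro k k' hk hk' x ⟨hxV, -, hkx⟩ y ⟨hyV, -, hky⟩ L
    have hkx' : kN G (cc ρ σ) A n x = k := by exact_mod_cast hkx
    have hky' : kN G (cc ρ σ) A n y = k' := by exact_mod_cast hky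
    have hLe : ∀ e ∈ L.edges, e ∈ G.edgeSet := by
      intro e he
      exact ((red_edge_iff).mp (L.edges_subset_edgeSet he)).1
    set LG := L.transfer G hLe with hLG
    have hins : ∀ e ∈ LG.edges, ¬ insideP (Vp G (cc ρ σ) A B n) e := by
      intro e he
      rw [hLG, Walk.edges_transfer] at he
      exact ((red_edge_iff).mp (L.edges_subset_edgeSet he)).2
    have hMG := MG hIP hn LG.length LG le_rfl hxV hyV hins
    rw [hkx', hky'] at hMG
    have hsum : wkSum (fun e => ((qq G (cc ρ σ) (Vp G (cc ρ σ) A B n) e : ℕ) : ℚ)) L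
        = ((S (qq G (cc ρ σ) (Vp G (cc ρ σ) A B n)) LG : ℕ) : ℚ) := by
      rw [wkSum_ratCast, S_transfer]
    rw [hsum]
    set s := S (qq G (cc ρ σ) (Vp G (cc ρ σ) A B n)) LG
    rcases le_total k k' with h | h
    · refine ⟨s - (k' - k), ?_⟩
      have habs : |(k : ℚ) - (k' : ℚ)| = ((k' - k : ℕ) : ℚ) := by
        rw [abs_sub_comm, abs_of_nonneg (by
          have : (k : ℚ) ≤ k' := by exact_mod_cast h
          linarith)]
        push_cast [h]
        ring
      rw [habs]
      have h1 : k' - k ≤ s := by omega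
      push_cast [h1, h]
      ring
    · refine ⟨s - (k - k'), ?_⟩
      have habs : |(k : ℚ) - (k' : ℚ)| = ((k - k' : ℕ) : ℚ) := by
        rw [abs_of_nonneg (by
          have : (k' : ℚ) ≤ k := by exact_mod_cast h
          linarith)]
        push_cast [h]
        ring
      rw [habs]
      have h1 : k - k' ≤ s := by omega
      push_cast [h1, h]
      ring
  · rintro k hk x ⟨hxV, -, hkx⟩ y hy L
    have hLe : ∀ e ∈ L.edges, e ∈ G.edgeSet := by
      intro e he
      exact ((red_edge_iff).mp (L.edges_subset_edgeSet he)).1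
    set LG := L.transfer G hLe with hLG
    have hMC := MC hIP hn LG hxV hy
    have hsum : wkSum (fun e => ((qq G (cc ρ σ) (Vp G (cc ρ σ) A B n) e : ℕ) : ℚ)) L
        = ((S (qq G (cc ρ σ) (Vp G (cc ρ σ) A B n)) LG : ℕ) : ℚ) := by
      rw [wkSum_ratCast, S_transfer]
    rw [hsum]
    set s := S (qq G (cc ρ σ) (Vp G (cc ρ σ) A B n)) LG
    refine ⟨s - (n - 1), ?_⟩
    have h1 : n - 1 ≤ s := by omega
    have h2 : ((2 * (n - 1) : ℕ) : ℚ) / 2 = ((n - 1 : ℕ) : ℚ) := by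
      push_cast [Nat.one_le_iff_ne_zero.mpr (by omega : n ≠ 0)]
      ring
    rw [h2]
    push_cast [h1]
    have h3 : (1 : ℚ) ≤ n := by exact_mod_cast (by omega : 1 ≤ n)
    push_cast [(by omega : 1 ≤ n)]
    ring

section WsumLemmas
variable [Fintype V]

lemma wsum_congr {f g : Sym2 V → ℝ} {S : Set (Sym2 V)} (h : ∀ e ∈ S, f e = g e) :
    wsum f S = wsum g S := by
  unfold wsum
  exact Finset.sum_congr rfl (fun e he => h e (Finset.mem_filter.mp he).2)

lemma wsum_sub (f g : Sym2 V → ℝ) (S : Set (Sym2 V)) :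
    wsum (fun e => f e - g e) S = wsum f S - wsum g S := by
  unfold wsum
  rw [Finset.sum_sub_distrib]

lemma wsum_partition (f : Sym2 V → ℝ) {S T U : Set (Sym2 V)}
    (h1 : ∀ e, e ∈ S ↔ (e ∈ T ∨ e ∈ U)) (h2 : ∀ e, e ∈ T → e ∉ U) :
    wsum f S = wsum f T + wsum f U := by
  classical
  unfold wsum
  rw [← Finset.sum_union ?hd]
  · refine Finset.sum_congr ?_ (fun _ _ => rfl)
    ext e
    simp only [Finset.mem_union, Finset.mem_filter, Finset.mem_univ, true_and]
    exact h1 e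
  · rw [Finset.disjoint_left]
    intro e he1 he2
    exact h2 e (Finset.mem_filter.mp he1).2 (Finset.mem_filter.mp he2).2

lemma wsum_restrict (f : Sym2 V → ℝ) {S T : Set (Sym2 V)}
    (h1 : ∀ e, e ∈ T → e ∈ S) (h2 : ∀ e ∈ S, e ∉ T → f e = 0) :
    wsum f S = wsum f T := by
  unfold wsum
  refine (Finset.sum_subset ?_ ?_).symm
  · intro e he
    simp only [Finset.mem_filter, Finset.mem_univ, true_and] at he ⊢
    exact h1 e he
  · intro e he hne
    simp only [Finset.mem_filter, Finset.mem_univ, true_and] at he hne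
    exact h2 e he hne

end WsumLemmas

end SSOS
/-- There is a subgraph `G' = (V',E')` (with `E'` the edges of `G` lying
inside `V'`), `A, B ⊆ V'`, an optimal solution `(ρ,σ)` of the integer program `I`, and a
function `k : V' → ℤ` with `0 ≤ k ≤ 2(n-1)`, `k ≡ 0` on `A`, `k ≡ 2(n-1)` on `B`, such
that `σ(e) = |k(x)-k(y)|` and `ρ(e) = 0` on `E'`; and the optimal value `M` of the
`ℓ`-intersecting cut problem (`ℓ = 2(n-1)`) on the complementary reduced graph `G^c` with
boundary sets `Γ_k = {x ∈ (AB)' : k(x) = k}` and `C` satisfies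
`I ≥ M + w(μ(V')) + Σ_{e={x,y}∈E'} w(e)|k(x)-k(y)|`. -/
theorem subgraph_structure_of_optimal_solution {V : Type*} [Fintype V]
    (G : SimpleGraph V) (w : Sym2 V → ℝ) (hw : ∀ e, 0 ≤ w e)
    (A B C : Set V) (hbdy : RTN.Bdy A B C) {n : ℕ} (hn : 2 ≤ n) :
    ∃ (V' : Set V) (ρ σ : Sym2 V → ℕ) (kf : V → ℤ),
      A ⊆ V' ∧ B ⊆ V' ∧
      RTN.IPfeas G A B C n ρ σ ∧ RTN.IPobj G w ρ σ = RTN.Ival G w A B C n ∧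
      (∀ x ∈ V', 0 ≤ kf x ∧ kf x ≤ 2 * ((n : ℤ) - 1)) ∧
      (∀ x ∈ A, kf x = 0) ∧ (∀ x ∈ B, kf x = 2 * ((n : ℤ) - 1)) ∧
      (∀ x y : V, G.Adj x y → x ∈ V' → y ∈ V' →
        (σ s(x, y) : ℤ) = |kf x - kf y| ∧ ρ s(x, y) = 0) ∧
      RTN.Ival G w A B C n ≥
        RTN.Mval (RTN.reducedGraph G V') w
          (fun k => {x | x ∈ V' ∧ (∃ y, G.Adj x y ∧ y ∉ V') ∧ kf x = (k : ℤ)})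
          (2 * (n - 1)) C
        + RTN.wsum w (RTN.mu G V')
        + RTN.wsum
            (fun e => w e *
              Sym2.lift ⟨fun x y => |(kf x : ℝ) - (kf y : ℝ)|,
                fun x y => abs_sub_comm _ _⟩ e)
            {e | e ∈ G.edgeSet ∧ ∀ v ∈ e, v ∈ V'} := by
  classical
  open SSOS RTN in
  obtain ⟨ρ, σ, hIP, hopt⟩ := SSOS.exists_opt G w hw hbdy hn
  have hIval : RTN.IPobj G w (SSOS.rho' G A B n ρ σ) (SSOS.sig' G A B n ρ σ)
      = RTN.Ival G w A B C n := by
    have hle : RTN.IPobj G w (SSOS.rho' G A B n ρ σ) (SSOS.sig' G A B n ρ σ)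
        ≤ RTN.IPobj G w ρ σ := by
      unfold RTN.IPobj RTN.wsum
      refine Finset.sum_le_sum (fun e he => ?_)
      simp only [Finset.mem_filter] at he
      have h1 : SSOS.cc (SSOS.rho' G A B n ρ σ) (SSOS.sig' G A B n ρ σ) e
          ≤ SSOS.cc ρ σ e := SSOS.cc'_le he.2
      have h2 : (SSOS.sig' G A B n ρ σ e : ℝ) + (SSOS.rho' G A B n ρ σ e : ℝ)
          ≤ (σ e : ℝ) + (ρ e : ℝ) := by
        have h3 : ((SSOS.cc (SSOS.rho' G A B n ρ σ) (SSOS.sig' G A B n ρ σ) e : ℕ) : ℝ)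
            ≤ ((SSOS.cc ρ σ e : ℕ) : ℝ) := by exact_mod_cast h1
        unfold SSOS.cc at h3
        push_cast at h3 ⊢
        linarith
      exact mul_le_mul_of_nonneg_left h2 (hw e)
    have hbdd : BddBelow {a | ∃ ρ₀ σ₀ : Sym2 V → ℕ, RTN.IPfeas G A B C n ρ₀ σ₀
        ∧ a = RTN.IPobj G w ρ₀ σ₀} := by
      refine ⟨0, ?_⟩
      rintro a ⟨ρ₀, σ₀, h₀, rfl⟩
      exact SSOS.IPobj_nonneg hw _ _
    have hmem : RTN.IPobj G w (SSOS.rho' G A B n ρ σ) (SSOS.sig' G A B n ρ σ)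
        ∈ {a | ∃ ρ₀ σ₀ : Sym2 V → ℕ, RTN.IPfeas G A B C n ρ₀ σ₀
            ∧ a = RTN.IPobj G w ρ₀ σ₀} :=
      ⟨_, _, SSOS.IPfeas_mod hIP hn, rfl⟩
    exact le_antisymm (hle.trans hopt.le) (csInf_le hbdd hmem)
  refine ⟨Vp G (cc ρ σ) A B n, rho' G A B n ρ σ, sig' G A B n ρ σ,
    fun x => ((kN G (cc ρ σ) A n x : ℕ) : ℤ), ?_, ?_, IPfeas_mod hIP hn, ?_, ?_, ?_, ?_, ?_, ?_⟩
  · exact fun a ha => Or.inl (Or.inl (A_sub_VA ha))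
  · exact fun b hb => Or.inl (Or.inr ⟨reach_self hb, dd_self hb⟩)
  · exact hIval
  · intro x hx
    dsimp only
    have h1 := kN_le (G := G) (ρ := ρ) (σ := σ) (A := A) (n := n) x
    constructor
    · positivity
    · omega
  · intro x hx
    dsimp only
    rw [kN_of_A (n := n) hx]
    rfl
  · intro x hx
    dsimp only
    rw [kN_of_B hIP hn hx]
    push_cast
    omega
  · intro x y hadj hx hy
    have hins : insideP (Vp G (cc ρ σ) A B n) s(x, y) := insideP_mk.mpr ⟨hx, hy⟩
    constructor
    · show ((sig' G A B n ρ σ s(x, y) : ℕ) : ℤ) = _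
      unfold sig'
      rw [if_pos hins, kDiff_eval, Int.natCast_natAbs]
    · show rho' G A B n ρ σ s(x, y) = 0
      unfold rho'
      rw [if_pos hins]
  · -- the main inequality
    have hMfeas := Mfeas_final hIP hn
    have hMle : Mval (reducedGraph G (Vp G (cc ρ σ) A B n)) w
        (fun k => {x | x ∈ Vp G (cc ρ σ) A B n
          ∧ (∃ y, G.Adj x y ∧ y ∉ Vp G (cc ρ σ) A B n)
          ∧ ((kN G (cc ρ σ) A n x : ℕ) : ℤ) = (k : ℤ)})
        (2 * (n - 1)) C
        ≤ Mobj (reducedGraph G (Vp G (cc ρ σ) A B n)) w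
            (fun e => ((qq G (cc ρ σ) (Vp G (cc ρ σ) A B n) e : ℕ) : ℚ)) := by
      apply csInf_le
      · refine ⟨0, ?_⟩
        rintro a ⟨ϱ₀, hf₀, rfl⟩
        unfold Mobj wsum
        refine Finset.sum_nonneg (fun e he => ?_)
        obtain ⟨j, hj⟩ := hf₀.1 e
        have hpos : (0 : ℝ) ≤ ((ϱ₀ e : ℚ) : ℝ) := by rw [hj]; positivity
        exact mul_nonneg (hw e) hpos
      · exact ⟨_, hMfeas, rfl⟩
    -- split of the IP objective
    have hpart : wsum (fun e => w e * ((sig' G A B n ρ σ e : ℝ) + (rho' G A B n ρ σ e : ℝ)))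
          G.edgeSet
        = wsum (fun e => w e * ((sig' G A B n ρ σ e : ℝ) + (rho' G A B n ρ σ e : ℝ)))
            {e : Sym2 V | e ∈ G.edgeSet ∧ ∀ v ∈ e, v ∈ Vp G (cc ρ σ) A B n}
          + wsum (fun e => w e * ((sig' G A B n ρ σ e : ℝ) + (rho' G A B n ρ σ e : ℝ)))
            (reducedGraph G (Vp G (cc ρ σ) A B n)).edgeSet := by
      refine wsum_partition _ (fun e => ?_) (fun e hT hU => ?_)
      · constructor
        · intro he
          by_cases hi : insideP (Vp G (cc ρ σ) A B n) e
          · exact Or.inl ⟨he, fun v hv => hi v hv⟩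
          · exact Or.inr (red_edge_iff.mpr ⟨he, hi⟩)
        · rintro (he | he)
          · exact he.1
          · exact (red_edge_iff.mp he).1
      · have h1 : insideP (Vp G (cc ρ σ) A B n) e := fun v hv => hT.2 v hv
        exact (red_edge_iff.mp hU).2 h1
    have hin : wsum (fun e => w e * ((sig' G A B n ρ σ e : ℝ) + (rho' G A B n ρ σ e : ℝ)))
          {e : Sym2 V | e ∈ G.edgeSet ∧ ∀ v ∈ e, v ∈ Vp G (cc ρ σ) A B n}
        = wsum (fun e =>
              w e * (Sym2.lift ⟨fun x y => |((kN G (cc ρ σ) A n x : ℤ) : ℝ)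
                - ((kN G (cc ρ σ) A n y : ℤ) : ℝ)|,
              fun x y => abs_sub_comm _ _⟩ e))
            {e : Sym2 V | e ∈ G.edgeSet ∧ ∀ v ∈ e, v ∈ Vp G (cc ρ σ) A B n} := by
      refine wsum_congr (fun e he => ?_)
      have hins : insideP (Vp G (cc ρ σ) A B n) e := fun v hv => he.2 v hv
      induction e using Sym2.ind with
      | _ x y =>
        have hc : sig' G A B n ρ σ s(x, y) = kDiff G (cc ρ σ) A n s(x, y) := by
          unfold sig'; rw [if_pos hins]
        have hr : rho' G A B n ρ σ s(x, y) = 0 := by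
          unfold rho'; rw [if_pos hins]
        rw [hc, hr, kDiff_eval]
        have hlift : Sym2.lift ⟨fun x y => |((kN G (cc ρ σ) A n x : ℤ) : ℝ)
            - ((kN G (cc ρ σ) A n y : ℤ) : ℝ)|,
            fun x y => abs_sub_comm _ _⟩ s(x, y)
            = |((kN G (cc ρ σ) A n x : ℤ) : ℝ) - ((kN G (cc ρ σ) A n y : ℤ) : ℝ)| := rfl
        rw [hlift]
        have habs : ((((kN G (cc ρ σ) A n x : ℤ) - (kN G (cc ρ σ) A n y : ℤ)).natAbs
            : ℕ) : ℝ)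
            = |((kN G (cc ρ σ) A n x : ℤ) : ℝ) - ((kN G (cc ρ σ) A n y : ℤ) : ℝ)| := by
          rw [Nat.cast_natAbs]
          push_cast
          ring_nf
        rw [← habs]
        push_cast
        ring
    have hout : wsum (fun e => w e * ((sig' G A B n ρ σ e : ℝ) + (rho' G A B n ρ σ e : ℝ)))
          (reducedGraph G (Vp G (cc ρ σ) A B n)).edgeSet
        = wsum (fun e => w e * ((cc ρ σ e : ℕ) : ℝ))
            (reducedGraph G (Vp G (cc ρ σ) A B n)).edgeSet := by
      refine wsum_congr (fun e he => ?_)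
      have hni := (red_edge_iff.mp he).2
      have hc := cc'_outside (ρ := ρ) (σ := σ) (n := n) (A := A) (B := B) hni
      have h8 : (sig' G A B n ρ σ e : ℝ) + (rho' G A B n ρ σ e : ℝ)
          = ((cc ρ σ e : ℕ) : ℝ) := by
        rw [← hc]
        unfold cc
        push_cast
        ring
      rw [h8]
    -- the M objective
    have hmu : wsum (fun e => w e * ((muInd G (Vp G (cc ρ σ) A B n) e : ℕ) : ℝ))
          (reducedGraph G (Vp G (cc ρ σ) A B n)).edgeSet
        = wsum w (mu G (Vp G (cc ρ σ) A B n)) := by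
      have hstep : wsum (fun e => w e * ((muInd G (Vp G (cc ρ σ) A B n) e : ℕ) : ℝ))
            (reducedGraph G (Vp G (cc ρ σ) A B n)).edgeSet
          = wsum (fun e => w e * ((muInd G (Vp G (cc ρ σ) A B n) e : ℕ) : ℝ))
              (mu G (Vp G (cc ρ σ) A B n)) := by
        refine wsum_restrict _ (fun e he => mu_sub_red he) (fun e he hne => ?_)
        have h0 : muInd G (Vp G (cc ρ σ) A B n) e = 0 := by
          unfold muInd; rw [if_neg hne]
        rw [h0]
        norm_num
      rw [hstep]
      refine wsum_congr (fun e he => ?_)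
      have h1 : muInd G (Vp G (cc ρ σ) A B n) e = 1 := by
        unfold muInd; rw [if_pos he]
      rw [h1]
      norm_num
    have hMobj : Mobj (reducedGraph G (Vp G (cc ρ σ) A B n)) w
        (fun e => ((qq G (cc ρ σ) (Vp G (cc ρ σ) A B n) e : ℕ) : ℚ))
        = wsum (fun e => w e * ((cc ρ σ e : ℕ) : ℝ))
            (reducedGraph G (Vp G (cc ρ σ) A B n)).edgeSet
          - wsum w (mu G (Vp G (cc ρ σ) A B n)) := by
      have hstep1 : Mobj (reducedGraph G (Vp G (cc ρ σ) A B n)) w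
          (fun e => ((qq G (cc ρ σ) (Vp G (cc ρ σ) A B n) e : ℕ) : ℚ))
          = wsum (fun e => w e * ((cc ρ σ e : ℕ) : ℝ)
              - w e * ((muInd G (Vp G (cc ρ σ) A B n) e : ℕ) : ℝ))
              (reducedGraph G (Vp G (cc ρ σ) A B n)).edgeSet := by
        refine wsum_congr (fun e he => ?_)
        have h2 := qq_cast (G := G) (ρ := ρ) (σ := σ) (A := A) (B := B) (n := n) e
        have h3 : ((((qq G (cc ρ σ) (Vp G (cc ρ σ) A B n) e : ℕ) : ℚ)) : ℝ)
            = ((qq G (cc ρ σ) (Vp G (cc ρ σ) A B n) e : ℕ) : ℝ) := by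
          push_cast
          rfl
        rw [h3, h2]
        ring
      rw [hstep1, wsum_sub, hmu]
    have hIvaleq : Ival G w A B C n
        = wsum (fun e =>
              w e * (Sym2.lift ⟨fun x y => |((kN G (cc ρ σ) A n x : ℤ) : ℝ)
                - ((kN G (cc ρ σ) A n y : ℤ) : ℝ)|,
              fun x y => abs_sub_comm _ _⟩ e))
            {e : Sym2 V | e ∈ G.edgeSet ∧ ∀ v ∈ e, v ∈ Vp G (cc ρ σ) A B n}
          + wsum (fun e => w e * ((cc ρ σ e : ℕ) : ℝ))
              (reducedGraph G (Vp G (cc ρ σ) A B n)).edgeSet := by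
      rw [← hIval]
      show wsum (fun e => w e * ((sig' G A B n ρ σ e : ℝ) + (rho' G A B n ρ σ e : ℝ)))
          G.edgeSet = _
      rw [hpart, hin, hout]
    have final : Mval (reducedGraph G (Vp G (cc ρ σ) A B n)) w
        (fun k => {x | x ∈ Vp G (cc ρ σ) A B n
          ∧ (∃ y, G.Adj x y ∧ y ∉ Vp G (cc ρ σ) A B n)
          ∧ ((kN G (cc ρ σ) A n x : ℕ) : ℤ) = (k : ℤ)})
        (2 * (n - 1)) C
        + wsum w (mu G (Vp G (cc ρ σ) A B n))
        + wsum (fun e =>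
              w e * (Sym2.lift ⟨fun x y => |((kN G (cc ρ σ) A n x : ℤ) : ℝ)
                - ((kN G (cc ρ σ) A n y : ℤ) : ℝ)|,
              fun x y => abs_sub_comm _ _⟩ e))
            {e : Sym2 V | e ∈ G.edgeSet ∧ ∀ v ∈ e, v ∈ Vp G (cc ρ σ) A B n}
        ≤ Ival G w A B C n := by
      linarith
    exact final
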